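/- arXiv:1509.05114 — 11 statements merged into one kernel-verified Lean document; each statement's English description precedes it below -/
import Mathlib

section
/- If the k-th center Z_k(G) has finite index in a group G for some positive integer k, then the (k+1)-th term of the lower central series γ_{k+1}(G) is finite. -/
open Subgroup QuotientGroup
open scoped commutatorElement

section BaerAux
variable {G : Type*} [Group G]


theorem baer_comm_left (u : G) (hu : u ∈ Subgroup.center G) (a b : G) :
    ⁅a * u, b⁆ = ⁅a, b⁆ := by
  have h1 : ∀ x y : G, u * (x * y) = x * (u * y) := fun x y => by
    rw [← mul_assoc, ← Subgroup.mem_center_iff.mp hu x, mul_assoc]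
  simp only [commutatorElement_def, mul_inv_rev, mul_assoc]
  rw [h1, mul_inv_cancel_left]

theorem baer_comm_right (u : G) (hu : u ∈ Subgroup.center G) (a b : G) :
    ⁅a, b * u⁆ = ⁅a, b⁆ := by
  have h1 : ∀ x y : G, u * (x * y) = x * (u * y) := fun x y => by
    rw [← mul_assoc, ← Subgroup.mem_center_iff.mp hu x, mul_assoc]
  simp only [commutatorElement_def, mul_inv_rev, mul_assoc]
  rw [h1, mul_inv_cancel_left]

theorem baer_comm_central (g h z w : G) (hz : z ∈ Subgroup.center G)
    (hw : w ∈ Subgroup.center G) : ⁅g * z, h * w⁆ = ⁅g, h⁆ := by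
  rw [baer_comm_left z hz, baer_comm_right w hw]

/-- Schur's theorem. -/
theorem baer_schur (h : (Subgroup.center G).FiniteIndex) : Finite (commutator G) := by
  haveI := h
  haveI : Finite (commutatorSet G) := by
    have hsub : commutatorSet G ⊆
        Set.range (fun p : (G ⧸ Subgroup.center G) × (G ⧸ Subgroup.center G) =>
          ⁅p.1.out, p.2.out⁆) := by
      rintro x ⟨g₁, g₂, rfl⟩
      refine ⟨((g₁ : G ⧸ Subgroup.center G), (g₂ : G ⧸ Subgroup.center G)), ?_⟩
      obtain ⟨z, hz⟩ := QuotientGroup.mk_out_eq_mul (Subgroup.center G) g₁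
      obtain ⟨w, hw⟩ := QuotientGroup.mk_out_eq_mul (Subgroup.center G) g₂
      simp only [hz, hw]
      exact baer_comm_central g₁ g₂ z w z.2 w.2
    exact (Set.Finite.subset (Set.finite_range _) hsub).to_subtype
  infer_instance


theorem baer_lcs_map {H : Type*} [Group H] (f : G →* H) (hf : Function.Surjective f) (n : ℕ) :
    Subgroup.map f ((⊤ : Subgroup G).lowerCentralSeries n) = (⊤ : Subgroup H).lowerCentralSeries n := by
  induction n with
  | zero => exact Subgroup.map_top_of_surjective f hf
  | succ n ih =>
    show Subgroup.map f ⁅(⊤ : Subgroup G).lowerCentralSeries n, ⊤⁆ = ⁅(⊤ : Subgroup H).lowerCentralSeries n, ⊤⁆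
    rw [Subgroup.map_commutator, ih, Subgroup.map_top_of_surjective f hf]

theorem baer_three_subgroups {H₁ H₂ H₃ N : Subgroup G} [N.Normal]
    (h1 : ⁅⁅H₂, H₃⁆, H₁⁆ ≤ N) (h2 : ⁅⁅H₃, H₁⁆, H₂⁆ ≤ N) : ⁅⁅H₁, H₂⁆, H₃⁆ ≤ N := by
  have key : ∀ {A B C : Subgroup G}, (⁅⁅A, B⁆, C⁆ ≤ N ↔
      ⁅⁅Subgroup.map (mk' N) A, Subgroup.map (mk' N) B⁆, Subgroup.map (mk' N) C⁆ = ⊥) := by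
    intro A B C
    rw [← Subgroup.map_commutator, ← Subgroup.map_commutator, Subgroup.map_eq_bot_iff, ker_mk']
  exact key.mpr (Subgroup.commutator_commutator_eq_bot_of_rotate (key.mp h1) (key.mp h2))

theorem baer_ucs_step (i : ℕ) :
    ⁅Subgroup.upperCentralSeries G (i + 1), (⊤ : Subgroup G)⁆ ≤ Subgroup.upperCentralSeries G i := by
  rw [Subgroup.commutator_le]
  intro z hz g _
  exact Subgroup.mem_upperCentralSeries_succ_iff.mp hz g

theorem baer_lcs_ucs (j : ℕ) : ∀ i : ℕ,
    ⁅(⊤ : Subgroup G).lowerCentralSeries j, Subgroup.upperCentralSeries G (i + j + 1)⁆ ≤ Subgroup.upperCentralSeries G i := by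
  induction j with
  | zero =>
    intro i
    rw [Subgroup.commutator_comm]
    simpa using baer_ucs_step (G := G) i
  | succ j ih =>
    intro i
    show ⁅⁅(⊤ : Subgroup G).lowerCentralSeries j, ⊤⁆, Subgroup.upperCentralSeries G (i + (j + 1) + 1)⁆ ≤ _
    have e1 : i + (j + 1) + 1 = (i + j + 1) + 1 := by omega
    rw [e1]
    apply baer_three_subgroups
    · calc ⁅⁅(⊤ : Subgroup G), Subgroup.upperCentralSeries G (i + j + 1 + 1)⁆, (⊤ : Subgroup G).lowerCentralSeries j⁆
          ≤ ⁅Subgroup.upperCentralSeries G (i + j + 1), (⊤ : Subgroup G).lowerCentralSeries j⁆ := by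
            apply Subgroup.commutator_mono _ le_rfl
            rw [Subgroup.commutator_comm]
            exact baer_ucs_step _
        _ ≤ Subgroup.upperCentralSeries G i := by rw [Subgroup.commutator_comm]; exact ih i
    · calc ⁅⁅Subgroup.upperCentralSeries G (i + j + 1 + 1), (⊤ : Subgroup G).lowerCentralSeries j⁆, ⊤⁆
          ≤ ⁅Subgroup.upperCentralSeries G (i + 1), (⊤ : Subgroup G)⁆ := by
            apply Subgroup.commutator_mono _ le_rfl
            rw [Subgroup.commutator_comm]
            have e2 : i + j + 1 + 1 = (i + 1) + j + 1 := by omega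
            rw [e2]
            exact ih (i + 1)
        _ ≤ Subgroup.upperCentralSeries G i := baer_ucs_step i

theorem baer_finite_of_ker_map {G' : Type*} [Group G'] (f : G →* G') (K : Subgroup G)
    (h1 : Finite f.ker) (h2 : Finite (Subgroup.map f K)) : Finite K := by
  let φ := f.comp K.subtype
  have hker : Finite φ.ker := by
    refine Finite.of_injective (fun x : φ.ker => (⟨x.1.1, x.2⟩ : f.ker)) ?_
    intro x y hxy
    exact Subtype.ext (Subtype.ext (Subtype.mk_eq_mk.mp hxy))
  have hrange : Finite φ.range := by
    rw [MonoidHom.range_comp, Subgroup.range_subtype]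
    exact h2
  have : Finite (K ⧸ φ.ker) := Finite.of_equiv _ (QuotientGroup.quotientKerEquivRange φ).symm.toEquiv
  exact Finite.of_equiv _ (Subgroup.groupEquivQuotientProdSubgroup (s := φ.ker)).symm


theorem baer_comm_left' (u : G) (hc : ∀ x : G, x * u = u * x) (a b : G) :
    ⁅a * u, b⁆ = ⁅a, b⁆ := by
  have h1 : ∀ x y : G, u * (x * y) = x * (u * y) := fun x y => by
    rw [← mul_assoc, ← hc x, mul_assoc]
  simp only [commutatorElement_def, mul_inv_rev, mul_assoc]
  rw [h1, mul_inv_cancel_left]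

theorem baer_comm_right' (u a b : G) (hc : u * a = a * u) : ⁅a, b * u⁆ = ⁅a, b⁆ := by
  have hc' : u * a⁻¹ = a⁻¹ * u := (Commute.inv_right (hc : Commute u a)).eq
  have h1 : u * (a⁻¹ * (u⁻¹ * b⁻¹)) = a⁻¹ * (u * (u⁻¹ * b⁻¹)) := by
    rw [← mul_assoc, hc', mul_assoc]
  simp only [commutatorElement_def, mul_inv_rev, mul_assoc]
  rw [h1, mul_inv_cancel_left]

theorem baer_key (A H : Subgroup G) [hA : A.Normal] [H.FiniteIndex]
    (hab : ∀ x ∈ A, ∀ y ∈ A, x * y = y * x)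
    (hcent : ∀ h ∈ H, ∀ a ∈ A, h * a = a * h)
    (e : ℕ) (he : 0 < e) (hpow : ∀ a ∈ A, a ^ e ∈ Subgroup.center G)
    (s : Finset G) (hs : ∀ t ∈ s, t ∈ A)
    (hcov : ∀ a ∈ A, ∃ t ∈ s, ∃ z ∈ Subgroup.center G, a = t * z) :
    Finite ↥(⁅A, (⊤ : Subgroup G)⁆ : Subgroup G) := by
  classical
  -- commutators with entries in A stay in A
  have hmemA : ∀ a ∈ A, ∀ g : G, ⁅a, g⁆ ∈ A := by
    intro a ha g
    have := mul_mem ha (hA.conj_mem a⁻¹ (inv_mem ha) g)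
    simpa [commutatorElement_def, mul_assoc] using this
  -- a ↦ ⁅a, g⁆ is multiplicative on A
  have hhom : ∀ (g : G), ∀ a ∈ A, ∀ b ∈ A, ⁅a * b, g⁆ = ⁅a, g⁆ * ⁅b, g⁆ := by
    intro g a ha b hb
    have hid : ⁅a * b, g⁆ = a * ⁅b, g⁆ * a⁻¹ * ⁅a, g⁆ := by
      simp only [commutatorElement_def]; group
    rw [hid, hab a ha ⁅b, g⁆ (hmemA b hb g), mul_inv_cancel_right,
      hab ⁅b, g⁆ (hmemA b hb g) ⁅a, g⁆ (hmemA a ha g)]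
  have hpow' : ∀ (g : G), ∀ a ∈ A, ∀ n : ℕ, ⁅a, g⁆ ^ n = ⁅a ^ n, g⁆ := by
    intro g a ha n
    induction n with
    | zero => simp
    | succ n ih => rw [pow_succ, pow_succ, ih, hhom g (a ^ n) (pow_mem ha n) a ha]
  -- the generating set
  haveI : Finite (G ⧸ H) := inferInstance
  let T : Set G := (fun p : G × (G ⧸ H) => ⁅p.1, p.2.out⁆) '' (↑s ×ˢ Set.univ)
  have hTfin : T.Finite := (s.finite_toSet.prod Set.finite_univ).image _
  -- every commutator ⁅a, g⁆ with a ∈ A lies in T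
  have hred : ∀ a ∈ A, ∀ g : G, ⁅a, g⁆ ∈ T := by
    intro a ha g
    obtain ⟨t, ht, z, hz, rfl⟩ := hcov a ha
    obtain ⟨hh, hout⟩ := QuotientGroup.mk_out_eq_mul H g
    refine ⟨(t, (g : G ⧸ H)), ⟨ht, trivial⟩, ?_⟩
    have h1 : ⁅t * z, g⁆ = ⁅t, g⁆ :=
      baer_comm_left' z (fun x => Subgroup.mem_center_iff.mp hz x) t g
    have h2 : (hh : G) * t = t * (hh : G) := hcent hh hh.2 t (hs t ht)
    have h3 : ⁅t, ((g : G ⧸ H)).out⁆ = ⁅t, g⁆ := by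
      rw [hout]; exact baer_comm_right' (hh : G) t g h2
    rw [h1, ← h3]
  -- the generators have order dividing e
  have hTprop : ∀ x ∈ T, x ∈ A ∧ x ^ e = 1 := by
    rintro x ⟨⟨t, q⟩, ⟨ht, -⟩, rfl⟩
    refine ⟨hmemA t (hs t ht) _, ?_⟩
    rw [hpow' _ t (hs t ht) e]
    exact commutatorElement_eq_one_iff_mul_comm.mpr
      (Subgroup.mem_center_iff.mp (hpow t (hs t ht)) _).symm
  -- ⁅A, ⊤⁆ is generated by T
  have hgen : ⁅A, (⊤ : Subgroup G)⁆ = Subgroup.closure T := by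
    apply le_antisymm
    · rw [Subgroup.commutator_le]
      intro a ha g _
      exact Subgroup.subset_closure (hred a ha g)
    · rw [Subgroup.closure_le]
      rintro x ⟨⟨t, q⟩, ⟨ht, -⟩, rfl⟩
      exact Subgroup.commutator_mem_commutator (hs t ht) (Subgroup.mem_top _)
  -- every element of the closure is in A and killed by e
  have hclos : ∀ x ∈ Subgroup.closure T, x ∈ A ∧ x ^ e = 1 := by
    intro x hx
    induction hx using Subgroup.closure_induction with
    | mem x hx => exact hTprop x hx
    | one => exact ⟨one_mem A, one_pow e⟩
    | mul x y hx hy px py =>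
      refine ⟨mul_mem px.1 py.1, ?_⟩
      have hc : Commute x y := hab x px.1 y py.1
      rw [hc.mul_pow, px.2, py.2, one_mul]
    | inv x hx px => exact ⟨inv_mem px.1, by rw [inv_pow, px.2, inv_one]⟩
  -- assemble: the commutator subgroup is a f.g. torsion abelian group
  have hKA : ⁅A, (⊤ : Subgroup G)⁆ ≤ A := Subgroup.commutator_le_left A ⊤
  letI : CommGroup ↥(⁅A, (⊤ : Subgroup G)⁆ : Subgroup G) :=
    { (inferInstance : Group ↥(⁅A, (⊤ : Subgroup G)⁆ : Subgroup G)) with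
      mul_comm := fun x y => Subtype.ext (hab x.1 (hKA x.2) y.1 (hKA y.2)) }
  haveI : Group.FG ↥(⁅A, (⊤ : Subgroup G)⁆ : Subgroup G) := by
    rw [Group.fg_iff_subgroup_fg]
    exact ⟨hTfin.toFinset, by rw [hTfin.coe_toFinset, hgen]⟩
  apply CommGroup.finite_of_fg_torsion
  intro x
  refine isOfFinOrder_iff_pow_eq_one.mpr ⟨e, he, ?_⟩
  have := (hclos x.1 (hgen ▸ x.2)).2
  exact Subtype.ext (by simpa using this)

end BaerAux

universe u

theorem baer_main {G : Type u} [Group G] (k : ℕ)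
    (h : (Subgroup.upperCentralSeries G (k + 1)).FiniteIndex) :
    Finite ((⊤ : Subgroup G).lowerCentralSeries (k + 1)) := by
  classical
  induction k generalizing G with
  | zero =>
    replace h : (Subgroup.upperCentralSeries G 1).FiniteIndex := h
    rw [Subgroup.upperCentralSeries_one] at h
    have : Finite (commutator G) := baer_schur h
    exact this
  | succ k ih =>
    set M := (⊤ : Subgroup G).lowerCentralSeries (k + 1) with hMdef
    haveI hMnorm : M.Normal := Subgroup.lowerCentralSeries_normal ⊤ (k + 1)
    let πc := QuotientGroup.mk' (Subgroup.center G)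
    -- the quotient by the center has (k+1)-st center of finite index
    haveI hQfi : (Subgroup.upperCentralSeries (G ⧸ Subgroup.center G) (k + 1)).FiniteIndex := by
      constructor
      have h1 := Subgroup.index_comap_of_surjective
        (Subgroup.upperCentralSeries (G ⧸ Subgroup.center G) (k + 1))
        (QuotientGroup.mk'_surjective (Subgroup.center G))
      rw [Subgroup.comap_upperCentralSeries_quotient_center] at h1
      rw [← h1]
      exact h.index_ne_zero
    -- hence the image of M in the central quotient is finite
    haveI hfin1 : Finite (Subgroup.map πc M) := by
      have h2 := ih (G := G ⧸ Subgroup.center G) hQfi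
      have h3 : Subgroup.map πc M = (⊤ : Subgroup (G ⧸ Subgroup.center G)).lowerCentralSeries (k + 1) :=
        baer_lcs_map πc (QuotientGroup.mk'_surjective _) (k+1)
      rw [h3]
      exact h2
    set e := Nat.card (Subgroup.map πc M) with hedef
    have he : 0 < e := Nat.card_pos
    have hMe : ∀ m ∈ M, m ^ e ∈ Subgroup.center G := by
      intro m hm
      have h1 : (⟨πc m, Subgroup.mem_map_of_mem πc hm⟩ : Subgroup.map πc M) ^ e = 1 :=
        pow_card_eq_one'
      have h2 : (πc m) ^ e = 1 := congrArg Subtype.val h1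
      have h3 : πc (m ^ e) = 1 := by rw [map_pow]; exact h2
      exact (QuotientGroup.eq_one_iff (m ^ e)).mp h3
    -- a finite central transversal of M
    obtain ⟨s, hsM, hcov⟩ : ∃ s : Finset G, (∀ t ∈ s, t ∈ M) ∧
        ∀ m ∈ M, ∃ t ∈ s, ∃ z ∈ Subgroup.center G, m = t * z := by
      have hch : ∀ q : Subgroup.map πc M, ∃ m : G, m ∈ M ∧ πc m = (q : G ⧸ Subgroup.center G) :=
        fun q => by
          obtain ⟨m, hm, hq⟩ := Subgroup.mem_map.mp q.2
          exact ⟨m, hm, hq⟩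
      choose F hF1 hF2 using hch
      have hrfin : (Set.range F).Finite := Set.finite_range F
      refine ⟨hrfin.toFinset, ?_, ?_⟩
      · intro t ht
        rw [Set.Finite.mem_toFinset] at ht
        obtain ⟨q, rfl⟩ := ht
        exact hF1 q
      · intro m hm
        set q : Subgroup.map πc M := ⟨πc m, Subgroup.mem_map_of_mem πc hm⟩ with hq
        refine ⟨F q, by rw [Set.Finite.mem_toFinset]; exact ⟨q, rfl⟩, (F q)⁻¹ * m, ?_, ?_⟩
        · have h1 : πc ((F q)⁻¹ * m) = 1 := by
            rw [map_mul, map_inv, hF2 q]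
            simp [hq]
          exact (QuotientGroup.eq_one_iff _).mp h1
        · rw [mul_inv_cancel_left]
    -- the center of M has finite index in M
    haveI hMc : (Subgroup.center M).FiniteIndex := by
      set φ := πc.comp M.subtype with hφ
      have hker : φ.ker ≤ Subgroup.center M := by
        intro x hx
        rw [MonoidHom.mem_ker] at hx
        have hxc : (x : G) ∈ Subgroup.center G := (QuotientGroup.eq_one_iff _).mp hx
        rw [Subgroup.mem_center_iff]
        intro y
        exact Subtype.ext (Subgroup.mem_center_iff.mp hxc y.1)
      have hrfin : Finite φ.range := by
        rw [MonoidHom.range_comp, Subgroup.range_subtype]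
        exact hfin1
      have hqfin : Finite (M ⧸ φ.ker) :=
        Finite.of_equiv _ (QuotientGroup.quotientKerEquivRange φ).symm.toEquiv
      have h1 : φ.ker.index ≠ 0 := by
        rw [Subgroup.index_eq_card]
        exact Nat.card_pos.ne'
      exact ⟨fun h0 => h1 (Nat.eq_zero_of_zero_dvd (h0 ▸ Subgroup.index_dvd_of_le hker))⟩
    have hcommM : Finite (commutator M) := baer_schur hMc
    -- N = ⁅M, M⁆ is a finite normal subgroup of G
    set N : Subgroup G := ⁅M, M⁆ with hNdef
    haveI hNn : N.Normal := Subgroup.commutator_normal M M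
    have hNfin : Finite N := by
      have himg : Subgroup.map M.subtype (commutator M) = N := by
        show Subgroup.map M.subtype ⁅(⊤ : Subgroup M), ⊤⁆ = ⁅M, M⁆
        rw [Subgroup.map_commutator, ← MonoidHom.range_eq_map, Subgroup.range_subtype]
      rw [← himg]
      have h1 : ((commutator M : Subgroup M) : Set M).Finite := Set.toFinite _
      have h2 : ((Subgroup.map M.subtype (commutator M)) : Set G).Finite := by
        rw [Subgroup.coe_map]
        exact h1.image _
      exact h2.to_subtype
    -- pass to the quotient by N
    let π := QuotientGroup.mk' N
    set A := Subgroup.map π M with hAdef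
    set Hq := Subgroup.map π (Subgroup.upperCentralSeries G (k + 1 + 1)) with hHqdef
    haveI hAnorm : A.Normal := Subgroup.Normal.map hMnorm π (QuotientGroup.mk'_surjective N)
    haveI hHqfi : Hq.FiniteIndex := by
      constructor
      intro h0
      have hdvd := Subgroup.index_map_dvd
        (H := Subgroup.upperCentralSeries G (k + 1 + 1)) (QuotientGroup.mk'_surjective N)
      rw [← hHqdef, h0] at hdvd
      exact h.index_ne_zero (Nat.eq_zero_of_zero_dvd hdvd)
    have habA : ∀ x ∈ A, ∀ y ∈ A, x * y = y * x := by
      intro x hx y hy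
      obtain ⟨m, hm, rfl⟩ := Subgroup.mem_map.mp hx
      obtain ⟨m', hm', rfl⟩ := Subgroup.mem_map.mp hy
      have h1 : ⁅m, m'⁆ ∈ N := Subgroup.commutator_mem_commutator hm hm'
      have h2 : π ⁅m, m'⁆ = 1 := (QuotientGroup.eq_one_iff _).mpr h1
      rw [map_commutatorElement] at h2
      exact commutatorElement_eq_one_iff_mul_comm.mp h2
    -- the (k+2)-nd center centralizes M
    have hcentG : ∀ z ∈ Subgroup.upperCentralSeries G (k + 1 + 1), ∀ m ∈ M, z * m = m * z := by
      have h1 : ⁅M, Subgroup.upperCentralSeries G (0 + (k + 1) + 1)⁆ ≤ Subgroup.upperCentralSeries G 0 :=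
        baer_lcs_ucs (k + 1) 0
      intro z hz m hm
      have hz' : z ∈ Subgroup.upperCentralSeries G (0 + (k + 1) + 1) := by
        have : (0 : ℕ) + (k + 1) + 1 = k + 1 + 1 := by omega
        rw [this]
        exact hz
      have h2 : ⁅m, z⁆ ∈ Subgroup.upperCentralSeries G 0 :=
        h1 (Subgroup.commutator_mem_commutator hm hz')
      rw [Subgroup.upperCentralSeries_zero, Subgroup.mem_bot] at h2
      exact (commutatorElement_eq_one_iff_mul_comm.mp h2).symm
    have hcentQ : ∀ x ∈ Hq, ∀ a ∈ A, x * a = a * x := by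
      intro x hx y hy
      obtain ⟨z, hz, rfl⟩ := Subgroup.mem_map.mp hx
      obtain ⟨m, hm, rfl⟩ := Subgroup.mem_map.mp hy
      rw [← map_mul, ← map_mul, hcentG z hz m hm]
    have hpowQ : ∀ a ∈ A, a ^ e ∈ Subgroup.center (G ⧸ N) := by
      intro a ha
      obtain ⟨m, hm, rfl⟩ := Subgroup.mem_map.mp ha
      rw [← map_pow, Subgroup.mem_center_iff]
      intro q
      obtain ⟨g, rfl⟩ := QuotientGroup.mk'_surjective N q
      rw [← map_mul, ← map_mul, Subgroup.mem_center_iff.mp (hMe m hm) g]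
    -- transversal in the quotient
    have hcovQ : ∀ a ∈ A, ∃ t ∈ s.image π, ∃ z ∈ Subgroup.center (G ⧸ N), a = t * z := by
      intro a ha
      obtain ⟨m, hm, rfl⟩ := Subgroup.mem_map.mp ha
      obtain ⟨t, ht, z, hz, rfl⟩ := hcov m hm
      refine ⟨π t, Finset.mem_image_of_mem π ht, π z, ?_, by rw [map_mul]⟩
      rw [Subgroup.mem_center_iff]
      intro q
      obtain ⟨g, rfl⟩ := QuotientGroup.mk'_surjective N q
      rw [← map_mul, ← map_mul, Subgroup.mem_center_iff.mp hz g]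
    have hsQ : ∀ t ∈ s.image π, t ∈ A := by
      intro t ht
      obtain ⟨t', ht', rfl⟩ := Finset.mem_image.mp ht
      exact Subgroup.mem_map_of_mem π (hsM t' ht')
    have hkey : Finite ↥(⁅A, (⊤ : Subgroup (G ⧸ N))⁆ : Subgroup (G ⧸ N)) :=
      baer_key A Hq habA hcentQ e he hpowQ (s.image π) hsQ hcovQ
    have hmap : Subgroup.map π ((⊤ : Subgroup G).lowerCentralSeries (k + 1 + 1)) = ⁅A, ⊤⁆ := by
      show Subgroup.map π ⁅M, ⊤⁆ = _
      rw [Subgroup.map_commutator, Subgroup.map_top_of_surjective π (QuotientGroup.mk'_surjective N)]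
    apply baer_finite_of_ker_map π ((⊤ : Subgroup G).lowerCentralSeries (k + 1 + 1)) ?_ ?_
    · rw [QuotientGroup.ker_mk']
      exact hNfin
    · rw [hmap]
      exact hkey

/-- Baer's theorem: if the k-th center has finite index, then γ_{k+1}(G) is finite. -/
theorem baer (G : Type*) [Group G] (k : ℕ) (hk : 0 < k)
    (h : (Subgroup.upperCentralSeries G k).FiniteIndex) :
    Finite ((⊤ : Subgroup G).lowerCentralSeries k) := by
  obtain ⟨j, rfl⟩ : ∃ j, k = j + 1 := ⟨k - 1, (Nat.succ_pred_eq_of_pos hk).symm⟩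
  exact baer_main j h
end

section
/- If γ_{k+1}(G) is finite for some positive integer k, then Z_{2k}(G) has finite index in G. -/
open Subgroup
open scoped commutatorElement

private theorem upperCentralSeries_normal (G : Type*) [Group G] (n : ℕ) :
    (Subgroup.upperCentralSeries G n).Normal := inferInstance

section HallProof
variable {G : Type*} [Group G]

-- ===== helpers (from h1) =====
private lemma hallWitt (a b c : G) :
    (b * ⁅⁅b⁻¹, a⁆, c⁆ * b⁻¹) * (c * ⁅⁅c⁻¹, b⁆, a⁆ * c⁻¹) * (a * ⁅⁅a⁻¹, c⁆, b⁆ * a⁻¹) = 1 := by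
  group

private lemma hw_mem {S : Subgroup G} (hS : S.Normal) {a b c : G}
    (h1 : ⁅⁅b⁻¹, a⁆, c⁆ ∈ S) (h2 : ⁅⁅c⁻¹, b⁆, a⁆ ∈ S) : ⁅⁅a⁻¹, c⁆, b⁆ ∈ S := by
  have key : ⁅⁅a⁻¹, c⁆, b⁆
      = a⁻¹ * ((c * ⁅⁅c⁻¹, b⁆, a⁆ * c⁻¹)⁻¹ * (b * ⁅⁅b⁻¹, a⁆, c⁆ * b⁻¹)⁻¹) * a := by
    group
  rw [key]
  have m1 : b * ⁅⁅b⁻¹, a⁆, c⁆ * b⁻¹ ∈ S := hS.conj_mem _ h1 b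
  have m2 : c * ⁅⁅c⁻¹, b⁆, a⁆ * c⁻¹ ∈ S := hS.conj_mem _ h2 c
  have hin : (c * ⁅⁅c⁻¹, b⁆, a⁆ * c⁻¹)⁻¹ * (b * ⁅⁅b⁻¹, a⁆, c⁆ * b⁻¹)⁻¹ ∈ S :=
    S.mul_mem (S.inv_mem m2) (S.inv_mem m1)
  simpa using hS.conj_mem _ hin a⁻¹

private lemma comm_swap_mem {B : Subgroup G} {u x : G} (h : ⁅u, x⁆ ∈ B) : ⁅x, u⁆ ∈ B := by
  have := B.inv_mem h
  rwa [commutatorElement_inv] at this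

private lemma comm_mem_lcs_succ {n : ℕ} {u : G} (hu : u ∈ (⊤ : Subgroup G).lowerCentralSeries n) (g : G) :
    ⁅u, g⁆ ∈ (⊤ : Subgroup G).lowerCentralSeries (n + 1) :=
  Subgroup.commutator_mem_commutator hu (mem_top g)

private lemma ucs_drop {p : ℕ} {z : G} (hz : z ∈ Subgroup.upperCentralSeries G (p + 1)) (g : G) :
    ⁅z, g⁆ ∈ Subgroup.upperCentralSeries G p :=
  (Subgroup.mem_upperCentralSeries_succ_iff).1 hz g

private lemma lcs_comm_mem : ∀ (b a : ℕ) {u w : G}, u ∈ (⊤ : Subgroup G).lowerCentralSeries a →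
    w ∈ (⊤ : Subgroup G).lowerCentralSeries b → ⁅u, w⁆ ∈ (⊤ : Subgroup G).lowerCentralSeries (a + b + 1)
  | 0, a, u, w, hu, _ => by simpa using comm_mem_lcs_succ hu w
  | (b+1), a, u, w, hu, hw => by
    let S : Subgroup G :=
      { carrier := {x | ⁅u, x⁆ ∈ (⊤ : Subgroup G).lowerCentralSeries (a + (b+1) + 1)}
        one_mem' := by simpa using Subgroup.one_mem _
        mul_mem' := by
          intro x y hx hy
          have key : ⁅u, x * y⁆ = ⁅u, x⁆ * (x * ⁅u, y⁆ * x⁻¹) := by group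
          simp only [Set.mem_setOf_eq] at hx hy ⊢
          rw [key]
          exact mul_mem hx ((Subgroup.lowerCentralSeries_normal _ _).conj_mem _ hy x)
        inv_mem' := by
          intro x hx
          have key : ⁅u, x⁻¹⁆ = x⁻¹ * ⁅u, x⁆⁻¹ * x := by group
          simp only [Set.mem_setOf_eq] at hx ⊢
          rw [key]
          simpa using (Subgroup.lowerCentralSeries_normal _ _).conj_mem _ (inv_mem hx) x⁻¹ }
    have hle : (⊤ : Subgroup G).lowerCentralSeries (b + 1) ≤ S := by
      show ⁅(⊤ : Subgroup G).lowerCentralSeries b, (⊤ : Subgroup G)⁆ ≤ S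
      rw [Subgroup.commutator_le]
      intro w' hw' g _
      show ⁅u, ⁅w', g⁆⁆ ∈ (⊤ : Subgroup G).lowerCentralSeries (a + (b+1) + 1)
      apply comm_swap_mem
      have h1 : ⁅⁅u⁻¹, w'⁻¹⁆, g⁆ ∈ (⊤ : Subgroup G).lowerCentralSeries (a + (b+1) + 1) := by
        have hi : ⁅u⁻¹, w'⁻¹⁆ ∈ (⊤ : Subgroup G).lowerCentralSeries (a + b + 1) :=
          lcs_comm_mem b a (inv_mem hu) (inv_mem hw')
        have := comm_mem_lcs_succ hi g
        simpa [show a + b + 1 + 1 = a + (b+1) + 1 by omega] using this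
      have h2 : ⁅⁅g⁻¹, u⁆, w'⁻¹⁆ ∈ (⊤ : Subgroup G).lowerCentralSeries (a + (b+1) + 1) := by
        have hg : ⁅g⁻¹, u⁆ ∈ (⊤ : Subgroup G).lowerCentralSeries (a + 1) :=
          comm_swap_mem (comm_mem_lcs_succ hu g⁻¹)
        have := lcs_comm_mem b (a+1) hg (inv_mem hw')
        simpa [show a + 1 + b + 1 = a + (b+1) + 1 by omega] using this
      have := hw_mem (Subgroup.lowerCentralSeries_normal ⊤ (a + (b+1) + 1))
        (a := w'⁻¹) (b := u) (c := g) (by simpa using h1) (by simpa using h2)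
      simpa using this
    exact hle hw

private lemma ucs_lcs_comm : ∀ (q p : ℕ) {z u : G}, z ∈ Subgroup.upperCentralSeries G (p + q + 1) →
    u ∈ (⊤ : Subgroup G).lowerCentralSeries q → ⁅z, u⁆ ∈ Subgroup.upperCentralSeries G p
  | 0, p, z, u, hz, _ => ucs_drop hz u
  | (q+1), p, z, u, hz, hu => by
    let S : Subgroup G :=
      { carrier := {x | ⁅z, x⁆ ∈ Subgroup.upperCentralSeries G p}
        one_mem' := by simpa using Subgroup.one_mem _
        mul_mem' := by
          intro x y hx hy
          have key : ⁅z, x * y⁆ = ⁅z, x⁆ * (x * ⁅z, y⁆ * x⁻¹) := by group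
          simp only [Set.mem_setOf_eq] at hx hy ⊢
          rw [key]
          exact mul_mem hx ((upperCentralSeries_normal _ _).conj_mem _ hy x)
        inv_mem' := by
          intro x hx
          have key : ⁅z, x⁻¹⁆ = x⁻¹ * ⁅z, x⁆⁻¹ * x := by group
          simp only [Set.mem_setOf_eq] at hx ⊢
          rw [key]
          simpa using (upperCentralSeries_normal _ _).conj_mem _ (inv_mem hx) x⁻¹ }
    have hle : (⊤ : Subgroup G).lowerCentralSeries (q + 1) ≤ S := by
      show ⁅(⊤ : Subgroup G).lowerCentralSeries q, (⊤ : Subgroup G)⁆ ≤ S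
      rw [Subgroup.commutator_le]
      intro u' hu' g _
      show ⁅z, ⁅u', g⁆⁆ ∈ Subgroup.upperCentralSeries G p
      apply comm_swap_mem
      have h1 : ⁅⁅z⁻¹, u'⁻¹⁆, g⁆ ∈ Subgroup.upperCentralSeries G p := by
        have hz' : z⁻¹ ∈ Subgroup.upperCentralSeries G ((p+1) + q + 1) := by
          apply inv_mem
          have e : p + (q+1) + 1 = (p+1) + q + 1 := by omega
          rwa [e] at hz
        have hi : ⁅z⁻¹, u'⁻¹⁆ ∈ Subgroup.upperCentralSeries G (p+1) :=
          ucs_lcs_comm q (p+1) hz' (inv_mem hu')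
        exact ucs_drop hi g
      have h2 : ⁅⁅g⁻¹, z⁆, u'⁻¹⁆ ∈ Subgroup.upperCentralSeries G p := by
        have hz2 : ⁅g⁻¹, z⁆ ∈ Subgroup.upperCentralSeries G (p + q + 1) := by
          apply comm_swap_mem
          have hz3 : z ∈ Subgroup.upperCentralSeries G ((p + q + 1) + 1) := by
            have e : p + (q+1) + 1 = (p + q + 1) + 1 := by omega
            rwa [e] at hz
          exact ucs_drop hz3 g⁻¹
        exact ucs_lcs_comm q p hz2 (inv_mem hu')
      have := hw_mem (upperCentralSeries_normal _ _)
        (a := u'⁻¹) (b := z) (c := g) (by simpa using h1) (by simpa using h2)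
      simpa using this
    exact hle hu

-- ===== cut subgroups (from h2) =====
private def cGrp (v : G) (B : Subgroup G) (hB : B.Normal) : Subgroup G where
  carrier := {x | ⁅v, x⁆ ∈ B}
  one_mem' := by simpa using B.one_mem
  mul_mem' := by
    intro x y hx hy
    have key : ⁅v, x * y⁆ = ⁅v, x⁆ * (x * ⁅v, y⁆ * x⁻¹) := by group
    simp only [Set.mem_setOf_eq] at hx hy ⊢
    rw [key]
    exact mul_mem hx (hB.conj_mem _ hy x)
  inv_mem' := by
    intro x hx
    have key : ⁅v, x⁻¹⁆ = x⁻¹ * ⁅v, x⁆⁻¹ * x := by group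
    simp only [Set.mem_setOf_eq] at hx ⊢
    rw [key]
    simpa using hB.conj_mem _ (inv_mem hx) x⁻¹

private lemma mem_cGrp {v x : G} {B : Subgroup G} {hB : B.Normal} :
    x ∈ cGrp v B hB ↔ ⁅v, x⁆ ∈ B := Iff.rfl

private lemma cGrp_relindex_ne_zero {A M B : Subgroup G} (hB : B.Normal) (v : G)
    (hmem : ∀ x ∈ A, ⁅v, x⁆ ∈ M) (hfin : B.relIndex M ≠ 0) :
    (cGrp v B hB).relIndex A ≠ 0 := by
  haveI : (B.subgroupOf M).FiniteIndex := ⟨hfin⟩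
  haveI hQfin : Finite (↥M ⧸ B.subgroupOf M) := Subgroup.finite_quotient_of_finiteIndex
  set H : Subgroup ↥A := (cGrp v B hB).subgroupOf A with hH
  have : Finite (↥A ⧸ H) := by
    let f : ↥A → ↥M ⧸ B.subgroupOf M :=
      fun x => QuotientGroup.mk ⟨⁅v, (x : G)⁆, hmem x x.2⟩
    have hrel : ∀ x y : ↥A, (⁅v, (x:G)⁆)⁻¹ * ⁅v, (y:G)⁆
        = (x:G) * ⁅v, (x:G)⁻¹ * y⁆ * (x:G)⁻¹ := by
      intro x y; group
    have hcompat : ∀ x y : ↥A, f x = f y ↔ x⁻¹ * y ∈ H := by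
      intro x y
      rw [QuotientGroup.eq, Subgroup.mem_subgroupOf, hH, Subgroup.mem_subgroupOf, mem_cGrp]
      constructor
      · intro h
        have h' : (⁅v, (x:G)⁆)⁻¹ * ⁅v, (y:G)⁆ ∈ B := h
        have e : ⁅v, (x:G)⁻¹ * (y:G)⁆
            = (x:G)⁻¹ * ((⁅v, (x:G)⁆)⁻¹ * ⁅v, (y:G)⁆) * ((x:G)⁻¹)⁻¹ := by group
        show ⁅v, (x:G)⁻¹ * (y:G)⁆ ∈ B
        rw [e]
        exact hB.conj_mem _ h' (x:G)⁻¹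
      · intro h
        have h' : ⁅v, (x:G)⁻¹ * (y:G)⁆ ∈ B := h
        show (⁅v, (x:G)⁆)⁻¹ * ⁅v, (y:G)⁆ ∈ B
        rw [hrel x y]
        exact hB.conj_mem _ h' (x:G)
    let F : (↥A ⧸ H) → (↥M ⧸ B.subgroupOf M) :=
      Quotient.lift f (by
        intro x y hxy
        exact (hcompat x y).2 (QuotientGroup.leftRel_apply.mp hxy))
    have hinj : Function.Injective F := by
      intro q1 q2
      induction q1 using Quotient.inductionOn
      induction q2 using Quotient.inductionOn
      intro h
      have h' : f _ = f _ := h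
      rename_i x y
      exact (QuotientGroup.eq).2 ((hcompat x y).1 h')
    exact Finite.of_injective F hinj
  exact Subgroup.index_ne_zero_of_finite

-- ===== kGrp (from h3) =====
private def kGrp (M B : Subgroup G) (hB : B.Normal) : Subgroup G where
  carrier := {g | ∀ u ∈ M, ⁅u, g⁆ ∈ B}
  one_mem' := by intro u _; simpa using B.one_mem
  mul_mem' := by
    intro g h hg hh u hu
    have key : ⁅u, g * h⁆ = ⁅u, g⁆ * (g * ⁅u, h⁆ * g⁻¹) := by group
    rw [key]
    exact mul_mem (hg u hu) (hB.conj_mem _ (hh u hu) g)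
  inv_mem' := by
    intro g hg u hu
    have key : ⁅u, g⁻¹⁆ = g⁻¹ * ⁅u, g⁆⁻¹ * g := by group
    rw [key]
    simpa using hB.conj_mem _ (inv_mem (hg u hu)) g⁻¹

private lemma mem_kGrp {g : G} {M B : Subgroup G} {hB : B.Normal} :
    g ∈ kGrp M B hB ↔ ∀ u ∈ M, ⁅u, g⁆ ∈ B := Iff.rfl

-- ===== reps (from h4) =====
private noncomputable def rep (A B : Subgroup G) :
    (↥A ⧸ B.subgroupOf A) → G := fun q => ((Quotient.out q : ↥A) : G)

private lemma rep_mem {A B : Subgroup G} (q : ↥A ⧸ B.subgroupOf A) : rep A B q ∈ A :=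
  (Quotient.out q).2

private lemma rep_decomp {A B : Subgroup G} {u : G} (hu : u ∈ A) :
    ∃ p ∈ B, u = rep A B (QuotientGroup.mk ⟨u, hu⟩) * p := by
  set uu : ↥A := ⟨u, hu⟩
  set q : ↥A ⧸ B.subgroupOf A := QuotientGroup.mk uu with hq
  have h1 : (QuotientGroup.mk (Quotient.out q) : ↥A ⧸ B.subgroupOf A) = QuotientGroup.mk uu :=
    (QuotientGroup.out_eq' q).trans hq
  have h2 : (Quotient.out q)⁻¹ * uu ∈ B.subgroupOf A := QuotientGroup.eq.mp h1
  refine ⟨(((Quotient.out q)⁻¹ * uu : ↥A) : G), (Subgroup.mem_subgroupOf).mp h2, ?_⟩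
  show u = ((Quotient.out q : ↥A) : G) * _
  push_cast
  group
  rfl


-- ===== the main stage lemma =====
private lemma stage (k n : ℕ) (hnk : n < k)
    (IH : ∀ m, n < m →
      (((⊤ : Subgroup G).lowerCentralSeries m) ⊓ (Subgroup.upperCentralSeries G (2*k - m))).relIndex
        ((⊤ : Subgroup G).lowerCentralSeries m) ≠ 0) :
    (((⊤ : Subgroup G).lowerCentralSeries n) ⊓ (Subgroup.upperCentralSeries G (2*k - n))).relIndex
      ((⊤ : Subgroup G).lowerCentralSeries n) ≠ 0 := by
  -- abbreviations
  set T : ℕ → Subgroup G := fun m => (⊤ : Subgroup G).lowerCentralSeries m ⊓ Subgroup.upperCentralSeries G (2*k - m)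
    with hTdef
  have hTn : ∀ m, (T m).Normal := fun m => Subgroup.normal_inf_normal _ _
  have hTU : ∀ m {x : G}, x ∈ T m → x ∈ Subgroup.upperCentralSeries G (2*k - m) := by
    intro m x hx; exact hx.2
  have hTL : ∀ m {x : G}, x ∈ T m → x ∈ (⊤ : Subgroup G).lowerCentralSeries m := by
    intro m x hx; exact hx.1
  have hTintro : ∀ m {x : G}, x ∈ (⊤ : Subgroup G).lowerCentralSeries m →
      x ∈ Subgroup.upperCentralSeries G (2*k - m) → x ∈ T m := by
    intro m x hx hu; exact ⟨hx, hu⟩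
  -- K groups are cofinite
  have kfin : ∀ m, n < m → m < 2*k →
      (kGrp ((⊤ : Subgroup G).lowerCentralSeries m) (T (m+1)) (hTn (m+1))).FiniteIndex := by
    intro m hm hm2
    haveI hfi : ((T m).subgroupOf ((⊤ : Subgroup G).lowerCentralSeries m)).FiniteIndex := ⟨IH m hm⟩
    haveI : Finite (↥((⊤ : Subgroup G).lowerCentralSeries m) ⧸ (T m).subgroupOf ((⊤ : Subgroup G).lowerCentralSeries m)) :=
      Subgroup.finite_quotient_of_finiteIndex
    have hcut : ∀ q : ↥((⊤ : Subgroup G).lowerCentralSeries m) ⧸ (T m).subgroupOf ((⊤ : Subgroup G).lowerCentralSeries m),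
        (cGrp (rep ((⊤ : Subgroup G).lowerCentralSeries m) (T m) q) (T (m+1)) (hTn (m+1))).FiniteIndex := by
      intro q
      refine ⟨?_⟩
      have hmain := cGrp_relindex_ne_zero (A := (⊤ : Subgroup G))
        (M := (⊤ : Subgroup G).lowerCentralSeries (m+1)) (hTn (m+1)) (rep ((⊤ : Subgroup G).lowerCentralSeries m) (T m) q)
        (fun x _ => comm_mem_lcs_succ (rep_mem q) x) (IH (m+1) (by omega))
      rwa [Subgroup.relIndex_top_right] at hmain
    haveI hii := Subgroup.finiteIndex_iInf
      (f := fun q => cGrp (rep ((⊤ : Subgroup G).lowerCentralSeries m) (T m) q) (T (m+1)) (hTn (m+1))) hcut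
    apply Subgroup.finiteIndex_of_le
      (H := ⨅ q, cGrp (rep ((⊤ : Subgroup G).lowerCentralSeries m) (T m) q) (T (m+1)) (hTn (m+1)))
    intro g hg
    rw [mem_kGrp]
    intro u hu
    obtain ⟨p, hp, hup⟩ := rep_decomp (B := T m) hu
    set v : G := rep ((⊤ : Subgroup G).lowerCentralSeries m) (T m) (QuotientGroup.mk ⟨u, hu⟩) with hvdef
    have hvg : ⁅v, g⁆ ∈ T (m+1) := Subgroup.mem_iInf.mp hg (QuotientGroup.mk ⟨u, hu⟩)
    have hpg : ⁅p, g⁆ ∈ T (m+1) := by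
      refine hTintro (m+1) (comm_mem_lcs_succ (hTL m hp) g) ?_
      have h2 := hTU m hp
      rw [show 2*k - m = (2*k - (m+1)) + 1 by omega] at h2
      exact ucs_drop h2 g
    have key : ⁅u, g⁆ = v * ⁅p, g⁆ * v⁻¹ * ⁅v, g⁆ := by
      rw [hup]; group
    rw [key]
    exact mul_mem ((hTn (m+1)).conj_mem _ hpg _) hvg
  -- the cofinite normal "kernel" subgroup D
  let D : Subgroup G := ⨅ j : Fin (n+1),
    kGrp ((⊤ : Subgroup G).lowerCentralSeries (n+1+(j:ℕ))) (T (n+1+(j:ℕ)+1)) (hTn (n+1+(j:ℕ)+1))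
  haveI hDfi : D.FiniteIndex :=
    Subgroup.finiteIndex_iInf (fun j => kfin (n+1+(j:ℕ)) (by omega) (by
      have := j.2; omega))
  have hD : ∀ c ∈ D, ∀ s, n+1 ≤ s → s ≤ 2*n+1 → ∀ w ∈ (⊤ : Subgroup G).lowerCentralSeries s,
      ⁅w, c⁆ ∈ T (s+1) := by
    intro c hc s hs1 hs2 w hw
    have hj := Subgroup.mem_iInf.mp hc ⟨s-(n+1), by omega⟩
    rw [mem_kGrp] at hj
    have hw' : w ∈ (⊤ : Subgroup G).lowerCentralSeries (n+1+(s-(n+1))) := by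
      rwa [show n+1+(s-(n+1)) = s by omega]
    have := hj w hw'
    rwa [show n+1+(s-(n+1))+1 = s+1 by omega] at this
  -- transversal of D
  haveI : Finite (G ⧸ D) := Subgroup.finite_quotient_of_finiteIndex
  have τdecomp : ∀ g : G, ∃ c ∈ D, g = Quotient.out (QuotientGroup.mk g : G ⧸ D) * c := by
    intro g
    have h1 : (QuotientGroup.mk (Quotient.out (QuotientGroup.mk g : G ⧸ D)) : G ⧸ D)
        = QuotientGroup.mk g := QuotientGroup.out_eq' _
    have h2 : (Quotient.out (QuotientGroup.mk g : G ⧸ D))⁻¹ * g ∈ D := QuotientGroup.eq.mp h1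
    exact ⟨_, h2, by group⟩
  -- the good subgroup X
  haveI hfi1 : ((T (n+1)).subgroupOf ((⊤ : Subgroup G).lowerCentralSeries (n+1))).FiniteIndex :=
    ⟨IH (n+1) (by omega)⟩
  haveI : Finite (↥((⊤ : Subgroup G).lowerCentralSeries (n+1)) ⧸
      (T (n+1)).subgroupOf ((⊤ : Subgroup G).lowerCentralSeries (n+1))) :=
    Subgroup.finite_quotient_of_finiteIndex
  set X : Subgroup G := ((⊤ : Subgroup G).lowerCentralSeries n) ⊓
      ((⨅ q : G ⧸ D, cGrp (Quotient.out q) (T (n+1)) (hTn (n+1))) ⊓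
       (⨅ q : ↥((⊤ : Subgroup G).lowerCentralSeries (n+1)) ⧸
            (T (n+1)).subgroupOf ((⊤ : Subgroup G).lowerCentralSeries (n+1)),
          cGrp (rep ((⊤ : Subgroup G).lowerCentralSeries (n+1)) (T (n+1)) q) (T (2*n+2)) (hTn (2*n+2))))
    with hXdef
  have hxL : ∀ x ∈ X, x ∈ (⊤ : Subgroup G).lowerCentralSeries n := fun x hx => hx.1
  have hxt : ∀ x ∈ X, ∀ q : G ⧸ D, ⁅Quotient.out q, x⁆ ∈ T (n+1) :=
    fun x hx q => Subgroup.mem_iInf.mp hx.2.1 q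
  have hxv : ∀ x ∈ X, ∀ q, ⁅rep ((⊤ : Subgroup G).lowerCentralSeries (n+1)) (T (n+1)) q, x⁆ ∈ T (2*n+2) :=
    fun x hx q => Subgroup.mem_iInf.mp hx.2.2 q
  -- the cascade
  have casc : ∀ (i m : ℕ), m + i = n + 1 → ∀ x ∈ X, ∀ u ∈ (⊤ : Subgroup G).lowerCentralSeries m,
      ⁅u, x⁆ ∈ Subgroup.upperCentralSeries G (2*k - (m+n+1)) := by
    intro i
    induction i with
    | zero =>
      intro m hm x hx u hu
      have hmn : m = n+1 := by omega
      subst hmn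
      obtain ⟨p, hp, hup⟩ := rep_decomp (B := T (n+1)) hu
      set v : G := rep ((⊤ : Subgroup G).lowerCentralSeries (n+1)) (T (n+1)) (QuotientGroup.mk ⟨u, hu⟩)
        with hvdef
      have hvx : ⁅v, x⁆ ∈ Subgroup.upperCentralSeries G (2*k - (n+1+n+1)) := by
        have h1 := hTU (2*n+2) (hxv x hx (QuotientGroup.mk ⟨u, hu⟩))
        rwa [show 2*k - (2*n+2) = 2*k - (n+1+n+1) by omega] at h1
      have hpx : ⁅p, x⁆ ∈ Subgroup.upperCentralSeries G (2*k - (n+1+n+1)) := by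
        have hpU : p ∈ Subgroup.upperCentralSeries G ((2*k - (n+1+n+1)) + n + 1) := by
          have h2 := hTU (n+1) hp
          rwa [show 2*k - (n+1) = (2*k - (n+1+n+1)) + n + 1 by omega] at h2
        exact ucs_lcs_comm n _ hpU (hxL x hx)
      have key : ⁅u, x⁆ = v * ⁅p, x⁆ * v⁻¹ * ⁅v, x⁆ := by
        rw [hup]; group
      rw [key]
      exact mul_mem ((upperCentralSeries_normal _ _).conj_mem _ hpx _) hvx
    | succ i ih =>
      intro m hm x hx c hc
      have hmn : m ≤ n := by omega
      rw [show 2*k - (m+n+1) = (2*k - (m+n+2)) + 1 by omega, Subgroup.mem_upperCentralSeries_succ_iff]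
      intro y
      show ⁅⁅c, x⁆, y⁆ ∈ Subgroup.upperCentralSeries G (2*k - (m+n+2))
      obtain ⟨c', hc', hy⟩ := τdecomp y
      set t : G := Quotient.out (QuotientGroup.mk y : G ⧸ D) with htdef
      have key2 : ⁅⁅c, x⁆, y⁆ = ⁅⁅c, x⁆, t⁆ * (t * ⁅⁅c, x⁆, c'⁆ * t⁻¹) := by
        rw [hy]; group
      rw [key2]
      apply mul_mem
      · -- Hall–Witt part
        have h1 : ⁅⁅t⁻¹, c⁻¹⁆, x⁆ ∈ Subgroup.upperCentralSeries G (2*k - (m+n+2)) := by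
          have hin : ⁅t⁻¹, c⁻¹⁆ ∈ (⊤ : Subgroup G).lowerCentralSeries (m+1) :=
            comm_swap_mem (comm_mem_lcs_succ (inv_mem hc) _)
          have h3 := ih (m+1) (by omega) x hx _ hin
          rwa [show 2*k - (m+1+n+1) = 2*k - (m+n+2) by omega] at h3
        have h2 : ⁅⁅x⁻¹, t⁆, c⁻¹⁆ ∈ Subgroup.upperCentralSeries G (2*k - (m+n+2)) := by
          have hxinv : x⁻¹ ∈ X := inv_mem hx
          have hswap : ⁅x⁻¹, t⁆ ∈ T (n+1) :=
            comm_swap_mem (hxt x⁻¹ hxinv (QuotientGroup.mk y))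
          have hU1 : ⁅x⁻¹, t⁆ ∈ Subgroup.upperCentralSeries G ((2*k - (m+n+2)) + m + 1) := by
            have h4 := hTU (n+1) hswap
            rwa [show 2*k - (n+1) = (2*k - (m+n+2)) + m + 1 by omega] at h4
          exact ucs_lcs_comm m _ hU1 (inv_mem hc)
        have h5 := hw_mem (upperCentralSeries_normal G (2*k - (m+n+2)))
          (a := c⁻¹) (b := t) (c := x) h1 h2
        simpa using h5
      · -- kernel part
        have hw : ⁅c, x⁆ ∈ (⊤ : Subgroup G).lowerCentralSeries (m+n+1) := lcs_comm_mem n m hc (hxL x hx)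
        have h6 := hD c' hc' (m+n+1) (by omega) (by omega) _ hw
        have hU : ⁅⁅c, x⁆, c'⁆ ∈ Subgroup.upperCentralSeries G (2*k - (m+n+2)) := by
          have h7 := hTU (m+n+1+1) h6
          rwa [show 2*k - (m+n+1+1) = 2*k - (m+n+2) by omega] at h7
        exact (upperCentralSeries_normal _ _).conj_mem _ hU _
  -- X is contained in T n
  have hXT : X ≤ T n := by
    intro x hx
    refine hTintro n (hxL x hx) ?_
    rw [show 2*k - n = (2*k - (n+1)) + 1 by omega, Subgroup.mem_upperCentralSeries_succ_iff]
    intro y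
    show ⁅x, y⁆ ∈ Subgroup.upperCentralSeries G (2*k - (n+1))
    have hy0 : y ∈ (⊤ : Subgroup G).lowerCentralSeries 0 := by
      rw [Subgroup.lowerCentralSeries_zero]; exact Subgroup.mem_top y
    have h8 := casc (n+1) 0 (by omega) x hx y hy0
    have h9 := comm_swap_mem h8
    rwa [show 2*k - (0+n+1) = 2*k - (n+1) by omega] at h9
  -- X has nonzero relative index in L n
  have hXfin : X.relIndex ((⊤ : Subgroup G).lowerCentralSeries n) ≠ 0 := by
    rw [hXdef, inf_comm, Subgroup.inf_relIndex_right]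
    apply Subgroup.relIndex_inf_ne_zero
    · apply Subgroup.relIndex_iInf_ne_zero
      intro q
      exact cGrp_relindex_ne_zero (M := (⊤ : Subgroup G).lowerCentralSeries (n+1)) (hTn (n+1)) _
        (fun x hxm => comm_swap_mem (comm_mem_lcs_succ hxm _)) (IH (n+1) (by omega))
    · apply Subgroup.relIndex_iInf_ne_zero
      intro q
      refine cGrp_relindex_ne_zero (M := (⊤ : Subgroup G).lowerCentralSeries (2*n+2)) (hTn (2*n+2)) _
        (fun x hxm => ?_) (IH (2*n+2) (by omega))
      have := lcs_comm_mem n (n+1) (rep_mem q) hxm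
      rwa [show n+1+n+1 = 2*n+2 by omega] at this
  have hdvd := Subgroup.relIndex_dvd_of_le_left ((⊤ : Subgroup G).lowerCentralSeries n) hXT
  intro h0
  rw [h0] at hdvd
  exact hXfin (Nat.eq_zero_of_zero_dvd hdvd)

end HallProof

/-- P. Hall's theorem: if γ_{k+1}(G) is finite, then Z_{2k}(G) has finite index. -/
theorem hall (G : Type*) [Group G] (k : ℕ) (hk : 0 < k)
    (h : Finite ((⊤ : Subgroup G).lowerCentralSeries k)) :
    (Subgroup.upperCentralSeries G (2 * k)).FiniteIndex := by
  have key : ∀ (d n : ℕ), k ≤ n + d →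
      (((⊤ : Subgroup G).lowerCentralSeries n) ⊓ (Subgroup.upperCentralSeries G (2*k - n))).relIndex
        ((⊤ : Subgroup G).lowerCentralSeries n) ≠ 0 := by
    intro d
    induction d with
    | zero =>
      intro n hn
      have hle : (⊤ : Subgroup G).lowerCentralSeries n ≤ (⊤ : Subgroup G).lowerCentralSeries k :=
        Subgroup.lowerCentralSeries_antitone _ (by omega)
      haveI : Finite ↥((⊤ : Subgroup G).lowerCentralSeries n) := by
        have hfin : ((⊤ : Subgroup G).lowerCentralSeries k : Set G).Finite := Set.toFinite _
        exact (hfin.subset hle).to_subtype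
      exact Subgroup.FiniteIndex.index_ne_zero
    | succ d ih =>
      intro n hn
      by_cases hc : k ≤ n + d
      · exact ih n hc
      · exact stage k n (by omega) (fun m hm => ih m (by omega))
  have h0 := key k 0 (by omega)
  rw [Subgroup.lowerCentralSeries_zero, Subgroup.relIndex_top_right] at h0
  refine ⟨?_⟩
  simpa using h0
end

section
/- Every finite-by-nilpotent group is nilpotent-by-finite. -/
/-- Every finite-by-nilpotent group is nilpotent-by-finite. -/
theorem finite_by_nilpotent_is_nilpotent_by_finite (G : Type*) [Group G]
    (N : Subgroup G) [N.Normal] (hfin : Finite N)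
    (hnil : Group.IsNilpotent (G ⧸ N)) :
    ∃ K : Subgroup G, K.Normal ∧ Group.IsNilpotent K ∧ K.FiniteIndex := by
  set K : Subgroup G := (MulAut.conjNormal (H := N)).ker with hK
  refine ⟨K, MonoidHom.normal_ker _, ?_, ?_⟩
  · -- K is nilpotent
    -- map K into G ⧸ N
    set f : K →* G ⧸ N := (QuotientGroup.mk' N).comp K.subtype with hf
    have hker : f.ker ≤ Subgroup.center K := by
      intro k hk
      have hkN : (k : G) ∈ N := by
        simpa [hf, QuotientGroup.eq_one_iff] using hk
      rw [Subgroup.mem_center_iff]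
      intro g
      have h1 : MulAut.conjNormal (g : G) = 1 := MonoidHom.mem_ker.mp g.2
      have hg : MulAut.conjNormal (g : G) ⟨(k : G), hkN⟩ = ⟨(k : G), hkN⟩ := by
        rw [h1]; rfl
      have h2 : (g : G) * (k : G) * (g : G)⁻¹ = (k : G) := by
        have := congrArg Subtype.val hg
        rwa [MulAut.conjNormal_apply] at this
      exact Subtype.ext (mul_inv_eq_iff_eq_mul.mp h2)
    exact isNilpotent_of_ker_le_center f hker
  · -- K has finite index
    have : Finite (MulAut N) :=
      Finite.of_injective MulEquiv.toEquiv MulEquiv.toEquiv_injective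
    exact Subgroup.finiteIndex_ker _
end

section
/- If G is central-by-finite (i.e., Z(G) has finite index in G), then the derived subgroup G' is finite, and the exponent of G' divides the index |G : Z(G)|. -/
open Subgroup
open scoped commutatorElement

lemma commutator_well_defined {G : Type*} [Group G] (a b c d : G)
    (hac : (a : G ⧸ center G) = c) (hbd : (b : G ⧸ center G) = d) :
    ⁅a, b⁆ = ⁅c, d⁆ := by
  rw [QuotientGroup.eq] at hac hbd
  obtain ⟨z, hz⟩ : ∃ z ∈ center G, c = a * z := ⟨a⁻¹ * c, hac, by group⟩
  obtain ⟨w, hw⟩ : ∃ w ∈ center G, d = b * w := ⟨b⁻¹ * d, hbd, by group⟩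
  obtain ⟨hzc, rfl⟩ := hz
  obtain ⟨hwc, rfl⟩ := hw
  rw [mem_center_iff] at hzc hwc
  simp only [commutatorElement_def, mul_inv_rev]
  symm
  calc a * z * (b * w) * (z⁻¹ * a⁻¹) * (w⁻¹ * b⁻¹)
      = a * (z * (b * w) * z⁻¹) * a⁻¹ * (w⁻¹ * b⁻¹) := by group
    _ = a * (b * w) * a⁻¹ * (w⁻¹ * b⁻¹) := by rw [← hzc (b * w)]; group
    _ = a * b * (w * a⁻¹ * w⁻¹) * b⁻¹ := by group
    _ = a * b * a⁻¹ * b⁻¹ := by rw [← hwc a⁻¹]; group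

lemma finite_commutatorSet_of_finiteIndex_center {G : Type*} [Group G]
    (h : (Subgroup.center G).FiniteIndex) : Finite (commutatorSet G) := by
  haveI := h
  haveI : Finite (G ⧸ center G) := Subgroup.finite_quotient_of_finiteIndex
  have hsurj : Function.Surjective
      (fun p : (G ⧸ center G) × (G ⧸ center G) =>
        (⟨⁅Quotient.out p.1, Quotient.out p.2⁆,
          commutator_mem_commutatorSet _ _⟩ : commutatorSet G)) := by
    rintro ⟨g, g₁, g₂, rfl⟩
    refine ⟨(↑g₁, ↑g₂), ?_⟩
    simp only [Subtype.mk.injEq]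
    exact Subtype.ext (commutator_well_defined _ _ _ _ (QuotientGroup.out_eq' (s := center G) _) (QuotientGroup.out_eq' (s := center G) _))
  exact Finite.of_surjective _ hsurj

/-- Schur's theorem: if Z(G) has finite index, then G' is finite and
exp(G') divides |G : Z(G)|. -/
theorem schur (G : Type*) [Group G] (h : (Subgroup.center G).FiniteIndex) :
    Finite (commutator G) ∧
      Monoid.exponent (commutator G) ∣ (Subgroup.center G).index := by
  haveI := h
  haveI := finite_commutatorSet_of_finiteIndex_center h
  refine ⟨inferInstance, ?_⟩
  refine Monoid.exponent_dvd_of_forall_pow_eq_one fun g => ?_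
  letI : CommGroup (center G) := { (center G).toGroup with mul_comm := mul_comm' }
  have hker := Abelianization.commutator_subset_ker (A := center G) (MonoidHom.transferCenterPow G) g.2
  rw [MonoidHom.mem_ker] at hker
  have : (g : G) ^ (center G).index = 1 := by
    have := congrArg (Subtype.val) hker
    rwa [MonoidHom.transferCenterPow_apply] at this
  ext
  simpa using this
end

section
/- In the group ν(G), for all g, h, x ∈ G the iterated commutator identities [g, hφ, xφ] = [g, h, xφ] = [g, hφ, x] = [gφ, h, xφ] = [gφ, hφ, x] = [gφ, h, x] hold. -/
open Monoid Subgroup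
open scoped commutatorElement

/-- The relators of the presentation of ν(G): for all g, h, k ∈ G,
`[g,hφ]^k = [g^k,(h^k)φ]` and `[g,hφ]^(kφ) = [g^k,(h^k)φ]` (exponents denote conjugation). -/
def nuRels (G : Type*) [Group G] : Set (Monoid.Coprod G G) :=
  { r | ∃ g h k : G,
      r = ((Coprod.inl k)⁻¹ * ⁅(Coprod.inl g : Coprod G G), Coprod.inr h⁆ * Coprod.inl k) *
          (⁅(Coprod.inl (k⁻¹ * g * k) : Coprod G G), Coprod.inr (k⁻¹ * h * k)⁆)⁻¹ ∨
      r = ((Coprod.inr k)⁻¹ * ⁅(Coprod.inl g : Coprod G G), Coprod.inr h⁆ * Coprod.inr k) *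
          (⁅(Coprod.inl (k⁻¹ * g * k) : Coprod G G), Coprod.inr (k⁻¹ * h * k)⁆)⁻¹ }

/-- The group ν(G): the quotient of the free product G * Gφ by the defining relations. -/
def Nu (G : Type*) [Group G] := Coprod G G ⧸ Subgroup.normalClosure (nuRels G)

instance (G : Type*) [Group G] : Group (Nu G) := QuotientGroup.Quotient.group _

/-- The canonical map G → ν(G) (the copy `G`). -/
def nuL (G : Type*) [Group G] : G →* Nu G := (QuotientGroup.mk' _).comp Coprod.inl

/-- The canonical map G → ν(G) (the copy `Gφ`). -/
def nuR (G : Type*) [Group G] : G →* Nu G := (QuotientGroup.mk' _).comp Coprod.inr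

section Helpers

/-- If conjugation by `a` and by `b` agree on `u`, then `⁅u,a⁆ = ⁅u,b⁆`. -/
lemma nu_comm_right_eq {N : Type*} [Group N] {u a b : N}
    (h : a * u * a⁻¹ = b * u * b⁻¹) : ⁅u, a⁆ = ⁅u, b⁆ := by
  have h1 : ⁅u, a⁆ = u * (a * u * a⁻¹)⁻¹ * u * u⁻¹ := by
    rw [commutatorElement_def]; group
  have h2 : ⁅u, b⁆ = u * (b * u * b⁻¹)⁻¹ * u * u⁻¹ := by
    rw [commutatorElement_def]; group
  rw [h1, h2, h]

/-- If `u` and `v` conjugate `a` the same way, then `⁅u,a⁆ = ⁅v,a⁆`. -/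
lemma nu_comm_left_eq {N : Type*} [Group N] {u v a : N}
    (h : u * a * u⁻¹ = v * a * v⁻¹) : ⁅u, a⁆ = ⁅v, a⁆ := by
  rw [commutatorElement_def, commutatorElement_def]
  exact congrArg (· * a⁻¹) h

variable {G N : Type*} [Group G] [Group N] (l r : G →* N)

/-- Key (Peiffer-type) lemma: `⁅l g, r h⁆` conjugates `r x` in the same way as
`l ⁅g,h⁆` does. -/
lemma nu_keyP
    (Hl : ∀ g h k : G, l k * ⁅l g, r h⁆ * (l k)⁻¹ = ⁅l (k*g*k⁻¹), r (k*h*k⁻¹)⁆)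
    (Hr : ∀ g h k : G, r k * ⁅l g, r h⁆ * (r k)⁻¹ = ⁅l (k*g*k⁻¹), r (k*h*k⁻¹)⁆)
    (g h x : G) :
    ⁅l g, r h⁆ * r x * ⁅l g, r h⁆⁻¹ = l ⁅g,h⁆ * r x * (l ⁅g,h⁆)⁻¹ := by
  have e2 := Hr g⁻¹ (h⁻¹*x*h) h
  rw [show h * (h⁻¹*x*h) * h⁻¹ = x by group] at e2
  have e3 := Hl (h*g⁻¹*h⁻¹) x g
  have hR : l ⁅g,h⁆ * r x * (l ⁅g,h⁆)⁻¹
      = (l g * ⁅l (h*g⁻¹*h⁻¹), r x⁆ * (l g)⁻¹) * (l g * r x * (l g)⁻¹) := by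
    simp only [commutatorElement_def, map_mul, map_inv]
    group
  calc ⁅l g, r h⁆ * r x * ⁅l g, r h⁆⁻¹
      = l g * ((r h * ⁅l g⁻¹, r (h⁻¹*x*h)⁆ * (r h)⁻¹) * r x) * (l g)⁻¹ := by
        simp only [commutatorElement_def, map_mul, map_inv]
        group
    _ = l g * (⁅l (h*g⁻¹*h⁻¹), r x⁆ * r x) * (l g)⁻¹ := by rw [e2]
    _ = (l g * ⁅l (h*g⁻¹*h⁻¹), r x⁆ * (l g)⁻¹) * (l g * r x * (l g)⁻¹) := by
        group
    _ = l ⁅g,h⁆ * r x * (l ⁅g,h⁆)⁻¹ := hR.symm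

/-- Second key lemma: `⁅r a, l b⁆` also conjugates `r x` in the same way as
`l ⁅a,b⁆` does. -/
lemma nu_keyP2
    (Hl : ∀ g h k : G, l k * ⁅l g, r h⁆ * (l k)⁻¹ = ⁅l (k*g*k⁻¹), r (k*h*k⁻¹)⁆)
    (Hr : ∀ g h k : G, r k * ⁅l g, r h⁆ * (r k)⁻¹ = ⁅l (k*g*k⁻¹), r (k*h*k⁻¹)⁆)
    (a b x : G) :
    ⁅r a, l b⁆ * r x * ⁅r a, l b⁆⁻¹ = l ⁅a,b⁆ * r x * (l ⁅a,b⁆)⁻¹ := by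
  have e1 := Hr b⁻¹ x a⁻¹
  simp only [map_inv, inv_inv] at e1
  -- e1 : (r a)⁻¹ * ⁅(l b)⁻¹, r x⁆ * r a = ⁅l (a⁻¹*b⁻¹*a), r (a⁻¹*x*a)⁆
  have e2 := Hl (a⁻¹*b⁻¹*a) (a⁻¹*x*a) b
  have e3 := Hr (b*(a⁻¹*b⁻¹*a)*b⁻¹) (b*(a⁻¹*x*a)*b⁻¹) a
  rw [show a*(b*(a⁻¹*b⁻¹*a)*b⁻¹)*a⁻¹ = (a*b*a⁻¹)*b⁻¹*(a*b*a⁻¹)⁻¹ by group,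
      show a*(b*(a⁻¹*x*a)*b⁻¹)*a⁻¹ = (a*b*a⁻¹)*x*(a*b*a⁻¹)⁻¹ by group] at e3
  have e4 := Hr b (a⁻¹*x*a) a
  rw [show a*(a⁻¹*x*a)*a⁻¹ = x by group] at e4
  have e5 := Hl b⁻¹ x (a*b*a⁻¹)
  simp only [map_inv] at e5
  -- e5 : l (a*b*a⁻¹) * ⁅(l b)⁻¹, r x⁆ * (l (a*b*a⁻¹))⁻¹
  --      = ⁅l ((a*b*a⁻¹)*b⁻¹*(a*b*a⁻¹)⁻¹), r ((a*b*a⁻¹)*x*(a*b*a⁻¹)⁻¹)⁆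
  have hR : l ⁅a,b⁆ * r x * (l ⁅a,b⁆)⁻¹
      = (l (a*b*a⁻¹) * ⁅(l b)⁻¹, r x⁆ * (l (a*b*a⁻¹))⁻¹) * (⁅l (a*b*a⁻¹), r x⁆ * r x) := by
    simp only [commutatorElement_def, map_mul, map_inv]
    group
  rw [e5] at hR
  calc ⁅r a, l b⁆ * r x * ⁅r a, l b⁆⁻¹
      = r a * (l b * (((r a)⁻¹ * ⁅(l b)⁻¹, r x⁆ * r a) * r (a⁻¹*x*a)) * (l b)⁻¹) * (r a)⁻¹ := by
        simp only [commutatorElement_def, map_mul, map_inv]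
        group
    _ = r a * (l b * (⁅l (a⁻¹*b⁻¹*a), r (a⁻¹*x*a)⁆ * r (a⁻¹*x*a)) * (l b)⁻¹) * (r a)⁻¹ := by
        rw [e1]
    _ = r a * ((l b * ⁅l (a⁻¹*b⁻¹*a), r (a⁻¹*x*a)⁆ * (l b)⁻¹) *
          (l b * r (a⁻¹*x*a) * (l b)⁻¹)) * (r a)⁻¹ := by
        simp only [commutatorElement_def, map_mul, map_inv]
        group
    _ = r a * (⁅l (b*(a⁻¹*b⁻¹*a)*b⁻¹), r (b*(a⁻¹*x*a)*b⁻¹)⁆ *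
          (l b * r (a⁻¹*x*a) * (l b)⁻¹)) * (r a)⁻¹ := by
        rw [e2]
    _ = (r a * ⁅l (b*(a⁻¹*b⁻¹*a)*b⁻¹), r (b*(a⁻¹*x*a)*b⁻¹)⁆ * (r a)⁻¹) *
          ((r a * ⁅l b, r (a⁻¹*x*a)⁆ * (r a)⁻¹) * (r a * r (a⁻¹*x*a) * (r a)⁻¹)) := by
        simp only [commutatorElement_def, map_mul, map_inv]
        group
    _ = ⁅l ((a*b*a⁻¹)*b⁻¹*(a*b*a⁻¹)⁻¹), r ((a*b*a⁻¹)*x*(a*b*a⁻¹)⁻¹)⁆ *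
          (⁅l (a*b*a⁻¹), r x⁆ * (r a * r (a⁻¹*x*a) * (r a)⁻¹)) := by
        rw [e3, e4]
    _ = ⁅l ((a*b*a⁻¹)*b⁻¹*(a*b*a⁻¹)⁻¹), r ((a*b*a⁻¹)*x*(a*b*a⁻¹)⁻¹)⁆ *
          (⁅l (a*b*a⁻¹), r x⁆ * r x) := by
        simp only [commutatorElement_def, map_mul, map_inv]
        group
    _ = l ⁅a,b⁆ * r x * (l ⁅a,b⁆)⁻¹ := hR.symm

end Helpers

section Relations

variable {G : Type*} [Group G]

lemma nu_mk_eq_one {w : Coprod G G} (hw : w ∈ nuRels G) :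
    (QuotientGroup.mk' (normalClosure (nuRels G))) w = 1 := by
  rw [QuotientGroup.mk'_apply, QuotientGroup.eq_one_iff]
  exact subset_normalClosure hw

lemma nu_base_l (g h k : G) :
    (nuL G k)⁻¹ * ⁅nuL G g, nuR G h⁆ * nuL G k = ⁅nuL G (k⁻¹*g*k), nuR G (k⁻¹*h*k)⁆ := by
  have h1 := nu_mk_eq_one (G := G) ⟨g, h, k, Or.inl rfl⟩
  simp only [map_mul, map_inv, map_commutatorElement] at h1
  rw [mul_inv_eq_one] at h1
  simp only [map_mul, map_inv]
  simp only [nuL, nuR, MonoidHom.comp_apply, map_mul, map_inv]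
  exact h1

lemma nu_base_r (g h k : G) :
    (nuR G k)⁻¹ * ⁅nuL G g, nuR G h⁆ * nuR G k = ⁅nuL G (k⁻¹*g*k), nuR G (k⁻¹*h*k)⁆ := by
  have h1 := nu_mk_eq_one (G := G) ⟨g, h, k, Or.inr rfl⟩
  simp only [map_mul, map_inv, map_commutatorElement] at h1
  rw [mul_inv_eq_one] at h1
  simp only [map_mul, map_inv]
  simp only [nuL, nuR, MonoidHom.comp_apply, map_mul, map_inv]
  exact h1

lemma nu_Hl (g h k : G) :
    nuL G k * ⁅nuL G g, nuR G h⁆ * (nuL G k)⁻¹ = ⁅nuL G (k*g*k⁻¹), nuR G (k*h*k⁻¹)⁆ := by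
  have := nu_base_l g h k⁻¹
  simp only [map_inv, inv_inv] at this
  exact this

lemma nu_Hr (g h k : G) :
    nuR G k * ⁅nuL G g, nuR G h⁆ * (nuR G k)⁻¹ = ⁅nuL G (k*g*k⁻¹), nuR G (k*h*k⁻¹)⁆ := by
  have := nu_base_r g h k⁻¹
  simp only [map_inv, inv_inv] at this
  exact this

lemma nu_Hl' (g h k : G) :
    nuR G k * ⁅nuR G g, nuL G h⁆ * (nuR G k)⁻¹ = ⁅nuR G (k*g*k⁻¹), nuL G (k*h*k⁻¹)⁆ := by
  calc nuR G k * ⁅nuR G g, nuL G h⁆ * (nuR G k)⁻¹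
      = (nuR G k * ⁅nuL G h, nuR G g⁆ * (nuR G k)⁻¹)⁻¹ := by
        rw [show ⁅nuR G g, nuL G h⁆ = ⁅nuL G h, nuR G g⁆⁻¹ from (commutatorElement_inv _ _).symm]
        group
    _ = ⁅nuL G (k*h*k⁻¹), nuR G (k*g*k⁻¹)⁆⁻¹ := by rw [nu_Hr h g k]
    _ = ⁅nuR G (k*g*k⁻¹), nuL G (k*h*k⁻¹)⁆ := commutatorElement_inv _ _

lemma nu_Hr' (g h k : G) :
    nuL G k * ⁅nuR G g, nuL G h⁆ * (nuL G k)⁻¹ = ⁅nuR G (k*g*k⁻¹), nuL G (k*h*k⁻¹)⁆ := by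
  calc nuL G k * ⁅nuR G g, nuL G h⁆ * (nuL G k)⁻¹
      = (nuL G k * ⁅nuL G h, nuR G g⁆ * (nuL G k)⁻¹)⁻¹ := by
        rw [show ⁅nuR G g, nuL G h⁆ = ⁅nuL G h, nuR G g⁆⁻¹ from (commutatorElement_inv _ _).symm]
        group
    _ = ⁅nuL G (k*h*k⁻¹), nuR G (k*g*k⁻¹)⁆⁻¹ := by rw [nu_Hl h g k]
    _ = ⁅nuR G (k*g*k⁻¹), nuL G (k*h*k⁻¹)⁆ := commutatorElement_inv _ _

end Relations

/-- Lemma 2.1(ii): the six iterated commutators coincide in ν(G). -/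
theorem nu_comm_iterated (G : Type*) [Group G] (g h x : G) :
    ⁅⁅nuL G g, nuR G h⁆, nuR G x⁆ = ⁅⁅nuL G g, nuL G h⁆, nuR G x⁆ ∧
    ⁅⁅nuL G g, nuL G h⁆, nuR G x⁆ = ⁅⁅nuL G g, nuR G h⁆, nuL G x⁆ ∧
    ⁅⁅nuL G g, nuR G h⁆, nuL G x⁆ = ⁅⁅nuR G g, nuL G h⁆, nuR G x⁆ ∧
    ⁅⁅nuR G g, nuL G h⁆, nuR G x⁆ = ⁅⁅nuR G g, nuR G h⁆, nuL G x⁆ ∧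
    ⁅⁅nuR G g, nuR G h⁆, nuL G x⁆ = ⁅⁅nuR G g, nuL G h⁆, nuL G x⁆ := by
  have key1 := nu_keyP (nuL G) (nuR G) nu_Hl nu_Hr g h x
  have key2 := nu_keyP2 (nuL G) (nuR G) nu_Hl nu_Hr g h x
  have key3 := nu_keyP (nuR G) (nuL G) nu_Hl' nu_Hr' g h x
  have hA : ⁅⁅nuL G g, nuR G h⁆, nuR G x⁆ = ⁅nuL G ⁅g,h⁆, nuR G x⁆ := nu_comm_left_eq key1
  have hB : ⁅⁅nuL G g, nuL G h⁆, nuR G x⁆ = ⁅nuL G ⁅g,h⁆, nuR G x⁆ := by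
    rw [← map_commutatorElement]
  have hD : ⁅⁅nuR G g, nuL G h⁆, nuR G x⁆ = ⁅nuL G ⁅g,h⁆, nuR G x⁆ := nu_comm_left_eq key2
  have hF : ⁅⁅nuR G g, nuL G h⁆, nuL G x⁆ = ⁅nuR G ⁅g,h⁆, nuL G x⁆ := nu_comm_left_eq key3
  have hE : ⁅⁅nuR G g, nuR G h⁆, nuL G x⁆ = ⁅nuR G ⁅g,h⁆, nuL G x⁆ := by
    rw [← map_commutatorElement]
  have hC : ⁅⁅nuL G g, nuR G h⁆, nuL G x⁆ = ⁅⁅nuL G g, nuR G h⁆, nuR G x⁆ :=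
    nu_comm_right_eq ((nu_Hl g h x).trans (nu_Hr g h x).symm)
  have hFD : ⁅⁅nuR G g, nuL G h⁆, nuL G x⁆ = ⁅⁅nuR G g, nuL G h⁆, nuR G x⁆ :=
    nu_comm_right_eq ((nu_Hr' g h x).trans (nu_Hl' g h x).symm)
  have hVW : ⁅nuL G ⁅g,h⁆, nuR G x⁆ = ⁅nuR G ⁅g,h⁆, nuL G x⁆ :=
    (hD.symm.trans (hFD.symm.trans hF))
  exact ⟨hA.trans hB.symm,
    hB.trans ((hC.trans hA).symm),
    (hC.trans hA).trans hD.symm,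
    hD.trans (hVW.trans hE.symm),
    hE.trans hF.symm⟩
end

section
/- In ν(G), if h ∈ G' (or g ∈ G'), then [g, hφ][h, gφ] = 1. -/
open Monoid Subgroup
open scoped commutatorElement

section NuAux

variable {G : Type*} [Group G]

/-- the mixed commutator `[x, yφ]` in ν(G). -/
def gnu (x y : G) : Nu G := ⁅nuL G x, nuR G y⁆

/-- `κ(x,y) = [x,yφ][y,xφ]` in ν(G). -/
def knu (x y : G) : Nu G := gnu x y * gnu y x

/-- conjugation by `nuL u`. -/
def clnu (u : G) (t : Nu G) : Nu G := nuL G u * t * (nuL G u)⁻¹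

/-- conjugation by `nuR u`. -/
def crnu (u : G) (t : Nu G) : Nu G := nuR G u * t * (nuR G u)⁻¹

lemma nu_rel1 (g h k : G) :
    (nuL G k)⁻¹ * gnu g h * nuL G k = gnu (k⁻¹ * g * k) (k⁻¹ * h * k) := by
  have hmem : (((Coprod.inl k)⁻¹ * ⁅(Coprod.inl g : Coprod G G), Coprod.inr h⁆ * Coprod.inl k) *
      (⁅(Coprod.inl (k⁻¹ * g * k) : Coprod G G), Coprod.inr (k⁻¹ * h * k)⁆)⁻¹) ∈
      Subgroup.normalClosure (nuRels G) :=
    Subgroup.subset_normalClosure ⟨g, h, k, Or.inl rfl⟩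
  have h1 : (QuotientGroup.mk' (Subgroup.normalClosure (nuRels G)))
      (((Coprod.inl k)⁻¹ * ⁅(Coprod.inl g : Coprod G G), Coprod.inr h⁆ * Coprod.inl k) *
      (⁅(Coprod.inl (k⁻¹ * g * k) : Coprod G G), Coprod.inr (k⁻¹ * h * k)⁆)⁻¹) = 1 :=
    (QuotientGroup.eq_one_iff _).2 hmem
  rw [map_mul, map_inv, mul_inv_eq_one, map_mul, map_mul, map_inv,
      map_commutatorElement, map_commutatorElement] at h1
  exact h1

lemma nu_rel2 (g h k : G) :
    (nuR G k)⁻¹ * gnu g h * nuR G k = gnu (k⁻¹ * g * k) (k⁻¹ * h * k) := by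
  have hmem : (((Coprod.inr k)⁻¹ * ⁅(Coprod.inl g : Coprod G G), Coprod.inr h⁆ * Coprod.inr k) *
      (⁅(Coprod.inl (k⁻¹ * g * k) : Coprod G G), Coprod.inr (k⁻¹ * h * k)⁆)⁻¹) ∈
      Subgroup.normalClosure (nuRels G) :=
    Subgroup.subset_normalClosure ⟨g, h, k, Or.inr rfl⟩
  have h1 : (QuotientGroup.mk' (Subgroup.normalClosure (nuRels G)))
      (((Coprod.inr k)⁻¹ * ⁅(Coprod.inl g : Coprod G G), Coprod.inr h⁆ * Coprod.inr k) *
      (⁅(Coprod.inl (k⁻¹ * g * k) : Coprod G G), Coprod.inr (k⁻¹ * h * k)⁆)⁻¹) = 1 :=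
    (QuotientGroup.eq_one_iff _).2 hmem
  rw [map_mul, map_inv, mul_inv_eq_one, map_mul, map_mul, map_inv,
      map_commutatorElement, map_commutatorElement] at h1
  exact h1

lemma clnu_mul (u : G) (s t : Nu G) : clnu u (s * t) = clnu u s * clnu u t := by
  unfold clnu; group

lemma clnu_clnu (u v : G) (t : Nu G) : clnu u (clnu v t) = clnu (u * v) t := by
  unfold clnu; rw [map_mul]; group

lemma clnu_inv (u : G) (t : Nu G) : clnu u t⁻¹ = (clnu u t)⁻¹ := by
  unfold clnu; group

lemma clnu_one (u : G) : clnu u (1 : Nu G) = 1 := by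
  unfold clnu; group

lemma clnu_id (t : Nu G) : clnu (1 : G) t = t := by
  unfold clnu; rw [map_one]; group

lemma clnu_gnu (k x y : G) : clnu k (gnu x y) = gnu (k * x * k⁻¹) (k * y * k⁻¹) := by
  have h := nu_rel1 x y k⁻¹
  simp only [map_inv, inv_inv] at h
  simpa [clnu, mul_assoc] using h

lemma crnu_gnu (k x y : G) : crnu k (gnu x y) = gnu (k * x * k⁻¹) (k * y * k⁻¹) := by
  have h := nu_rel2 x y k⁻¹
  simp only [map_inv, inv_inv] at h
  simpa [crnu, mul_assoc] using h

/-- The subgroup T generated by the mixed commutators. -/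
def TNu (G : Type*) [Group G] : Subgroup (Nu G) :=
  Subgroup.closure {t : Nu G | ∃ x y : G, t = gnu x y}

lemma gnu_mem (x y : G) : gnu x y ∈ TNu G :=
  Subgroup.subset_closure ⟨x, y, rfl⟩

lemma knu_mem (x y : G) : knu x y ∈ TNu G := mul_mem (gnu_mem x y) (gnu_mem y x)

lemma clnu_mem {t : Nu G} (u : G) (ht : t ∈ TNu G) : clnu u t ∈ TNu G := by
  induction ht using Subgroup.closure_induction with
  | mem x hx =>
      obtain ⟨p, q, rfl⟩ := hx
      rw [clnu_gnu]; exact gnu_mem _ _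
  | one => rw [clnu_one]; exact one_mem _
  | mul x y hx hy ihx ihy => rw [clnu_mul]; exact mul_mem ihx ihy
  | inv x hx ihx => rw [clnu_inv]; exact inv_mem ihx

lemma crnu_eq_clnu {t : Nu G} (u : G) (ht : t ∈ TNu G) : crnu u t = clnu u t := by
  induction ht using Subgroup.closure_induction with
  | mem x hx =>
      obtain ⟨p, q, rfl⟩ := hx
      rw [clnu_gnu, crnu_gnu]
  | one => unfold clnu crnu; group
  | mul x y hx hy ihx ihy =>
      have : ∀ w : G, ∀ s s' : Nu G, crnu w (s * s') = crnu w s * crnu w s' := by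
        intro w s s'; unfold crnu; group
      rw [this, clnu_mul, ihx, ihy]
  | inv x hx ihx =>
      have : ∀ w : G, ∀ s : Nu G, crnu w s⁻¹ = (crnu w s)⁻¹ := by
        intro w s; unfold crnu; group
      rw [this, clnu_inv, ihx]

/-- Peiffer-type identity: conjugation by `[a,bφ]` agrees with conjugation by `[a,b]` on T. -/
lemma peiffer {t : Nu G} (a b : G) (ht : t ∈ TNu G) :
    gnu a b * t * (gnu a b)⁻¹ = clnu ⁅a, b⁆ t := by
  have e1 : gnu a b * t * (gnu a b)⁻¹
      = clnu a (crnu b (clnu a⁻¹ (crnu b⁻¹ t))) := by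
    simp only [gnu, clnu, crnu, map_inv, commutatorElement_def]
    group
  rw [e1, crnu_eq_clnu b⁻¹ ht, crnu_eq_clnu b (clnu_mem _ (clnu_mem _ ht)),
      clnu_clnu, clnu_clnu, clnu_clnu, commutatorElement_def]

lemma comm_knu {t : Nu G} (x y : G) (ht : t ∈ TNu G) :
    knu x y * t * (knu x y)⁻¹ = t := by
  have e1 : knu x y * t * (knu x y)⁻¹
      = gnu x y * (gnu y x * t * (gnu y x)⁻¹) * (gnu x y)⁻¹ := by
    unfold knu; group
  rw [e1, peiffer y x ht, peiffer x y (clnu_mem _ ht), clnu_clnu,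
      ← commutatorElement_inv, inv_mul_cancel, clnu_id]

lemma commute_knu {t : Nu G} (x y : G) (ht : t ∈ TNu G) : Commute (knu x y) t := by
  have := comm_knu x y ht
  rw [mul_inv_eq_iff_eq_mul] at this
  exact this

lemma comm_nab {t : Nu G} (p : G) (ht : t ∈ TNu G) :
    gnu p p * t * (gnu p p)⁻¹ = t := by
  have e1 : gnu p p * t * (gnu p p)⁻¹ = clnu ⁅p, p⁆ t := peiffer p p ht
  rw [e1, commutatorElement_self, clnu_id]

lemma commute_nab {t : Nu G} (p : G) (ht : t ∈ TNu G) : Commute (gnu p p) t := by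
  have := comm_nab p ht
  rw [mul_inv_eq_iff_eq_mul] at this
  exact this

lemma clnu_knu (u x y : G) : clnu u (knu x y) = knu (u * x * u⁻¹) (u * y * u⁻¹) := by
  unfold knu
  rw [clnu_mul, clnu_gnu, clnu_gnu]

lemma z4 (a b p q : G) : clnu ⁅a, b⁆ (knu p q) = knu p q := by
  rw [← peiffer a b (knu_mem p q)]
  have h := commute_knu p q (gnu_mem a b)
  rw [(h.symm.eq), mul_assoc, mul_inv_cancel, mul_one]

lemma z4_inv (a b p q : G) : clnu ⁅a, b⁆ ((knu p q)⁻¹) = (knu p q)⁻¹ := by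
  rw [clnu_inv, z4]

lemma gnu_one_right (x : G) : gnu x 1 = 1 := by
  unfold gnu; rw [map_one, commutatorElement_one_right]

lemma gnu_one_left (y : G) : gnu 1 y = 1 := by
  unfold gnu; rw [map_one, commutatorElement_one_left]

lemma knu_one_right (x : G) : knu x 1 = 1 := by
  unfold knu; rw [gnu_one_right, gnu_one_left, one_mul]

lemma gnu_x1 (x y z : G) : gnu x (y * z) = gnu x y * clnu y (gnu x z) := by
  rw [← crnu_eq_clnu y (gnu_mem x z)]
  simp only [gnu, crnu, map_mul, commutatorElement_def]
  group

lemma gnu_x2 (x y z : G) : gnu (x * y) z = clnu x (gnu y z) * gnu x z := by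
  simp only [gnu, clnu, map_mul, commutatorElement_def]
  group

lemma gnu_inv2 (x y : G) : gnu x y⁻¹ = clnu y⁻¹ ((gnu x y)⁻¹) := by
  have h := gnu_x1 x y y⁻¹
  rw [mul_inv_cancel, gnu_one_right] at h
  have h2 : clnu y (gnu x y⁻¹) = (gnu x y)⁻¹ := (inv_eq_of_mul_eq_one_right h.symm).symm
  have := congrArg (clnu y⁻¹) h2
  rwa [clnu_clnu, inv_mul_cancel, clnu_id] at this


lemma knu_sym (x y : G) : knu x y = knu y x := by
  have h : Commute (knu x y) (gnu y x) := commute_knu x y (gnu_mem y x)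
  have h2 : gnu y x * knu x y * (gnu y x)⁻¹ = knu x y := by
    rw [← h.eq]; group
  calc knu x y = gnu y x * knu x y * (gnu y x)⁻¹ := h2.symm
    _ = knu y x := by unfold knu; group

lemma knu_bil (x y z : G) : knu x (y * z) = knu x y * clnu y (knu x z) := by
  have e3 : knu x (y * z) = gnu x y * clnu y (knu x z) * gnu y x := by
    unfold knu
    rw [gnu_x1 x y z, gnu_x2 y z x, clnu_mul]
    group
  have hc : Commute (clnu y (knu x z)) (gnu y x) := by
    rw [clnu_knu]; exact commute_knu _ _ (gnu_mem y x)
  calc knu x (y * z) = gnu x y * clnu y (knu x z) * gnu y x := e3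
    _ = gnu x y * (clnu y (knu x z) * gnu y x) := by group
    _ = gnu x y * (gnu y x * clnu y (knu x z)) := by rw [hc.eq]
    _ = knu x y * clnu y (knu x z) := by unfold knu; group

lemma knu_inv (x y : G) : knu x y⁻¹ = clnu y⁻¹ ((knu x y)⁻¹) := by
  have h := knu_bil x y y⁻¹
  rw [mul_inv_cancel, knu_one_right] at h
  have h2 : clnu y (knu x y⁻¹) = (knu x y)⁻¹ := (inv_eq_of_mul_eq_one_right h.symm).symm
  have h3 := congrArg (clnu y⁻¹) h2
  rwa [clnu_clnu, inv_mul_cancel, clnu_id] at h3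

lemma nab_conj (k h : G) : clnu (k * h * k⁻¹) (gnu k k) = gnu k k := by
  have ha : clnu k (gnu k h) = gnu k (k * h * k⁻¹) := by
    rw [clnu_gnu]
    congr 1
    group
  have harg : ⁅k, h⁆ * h = k * h * k⁻¹ := by rw [commutatorElement_def]; group
  have hb : gnu k (k * h * k⁻¹) = gnu k ⁅k, h⁆ * clnu ⁅k, h⁆ (gnu k h) := by
    rw [← harg]; exact gnu_x1 k ⁅k, h⁆ h
  have harg2 : (⁅k, h⁆ : G) = k * (h * (k⁻¹ * h⁻¹)) := by
    rw [commutatorElement_def]; group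
  have hc : gnu k ⁅k, h⁆ = gnu k k * clnu k (gnu k h) *
      clnu (k * h * k⁻¹) ((gnu k k)⁻¹) * clnu (k * h * k⁻¹ * h⁻¹) ((gnu k h)⁻¹) := by
    rw [harg2, gnu_x1 k k (h * (k⁻¹ * h⁻¹)), gnu_x1 k h (k⁻¹ * h⁻¹),
        gnu_x1 k k⁻¹ h⁻¹, gnu_inv2 k k, gnu_inv2 k h]
    rw [clnu_mul h, clnu_mul k, clnu_mul k, clnu_clnu, clnu_clnu, clnu_clnu, clnu_clnu,
        clnu_clnu]
    group
  have hS1 : gnu k ⁅k, h⁆ * clnu ⁅k, h⁆ (gnu k h) = clnu k (gnu k h) := by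
    rw [ha, hb]
  rw [hc] at hS1
  rw [commutatorElement_def k h] at hS1
  simp only [clnu_inv] at hS1
  rw [mul_assoc _ (clnu (k * h * k⁻¹ * h⁻¹) (gnu k h))⁻¹ (clnu (k * h * k⁻¹ * h⁻¹) (gnu k h)),
      inv_mul_cancel, mul_one] at hS1
  set C := clnu k (gnu k h) with hC
  set N := clnu (k * h * k⁻¹) (gnu k k) with hNdef
  -- hS1 : gnu k k * C * N⁻¹ = C
  have hCmem : C ∈ TNu G := clnu_mem _ (gnu_mem _ _)
  have hNg : N = gnu ((k * h * k⁻¹) * k * (k * h * k⁻¹)⁻¹) ((k * h * k⁻¹) * k * (k * h * k⁻¹)⁻¹) :=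
    clnu_gnu _ _ _
  have hcom : Commute N C := by rw [hNg]; exact commute_nab _ hCmem
  have h6 : C * N⁻¹ = N⁻¹ * C := (hcom.inv_left.eq).symm
  have h7 : gnu k k * N⁻¹ * C = C := by
    calc gnu k k * N⁻¹ * C = gnu k k * (N⁻¹ * C) := by rw [mul_assoc]
      _ = gnu k k * (C * N⁻¹) := by rw [h6]
      _ = gnu k k * C * N⁻¹ := by rw [mul_assoc]
      _ = C := hS1
  have h8 : (gnu k k * N⁻¹) * C = 1 * C := by rw [one_mul]; exact h7
  have h9 := mul_right_cancel h8
  rw [mul_inv_eq_one] at h9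
  exact h9.symm

lemma nab_inv (u k : G) : clnu u (gnu k k) = gnu k k := by
  have h := nab_conj k (k⁻¹ * u * k)
  rwa [show k * (k⁻¹ * u * k) * k⁻¹ = u by group] at h

lemma nab_gconj (u k : G) : gnu (u * k * u⁻¹) (u * k * u⁻¹) = gnu k k := by
  rw [← clnu_gnu]; exact nab_inv u k

lemma nab_mul (x y : G) :
    gnu (x * y) (x * y) = gnu x x * gnu y y * clnu x (knu y x) := by
  have e1 : gnu (x * y) (x * y)
      = clnu x (gnu y x) * clnu (x * x) (gnu y y) * (gnu x x * clnu x (gnu x y)) := by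
    rw [gnu_x2 x y (x * y), gnu_x1 y x y, gnu_x1 x x y, clnu_mul, clnu_clnu]
  rw [e1, nab_inv (x * x) y]
  have hA : clnu x (gnu y x) ∈ TNu G := clnu_mem _ (gnu_mem _ _)
  have c1 : Commute (gnu y y) (clnu x (gnu y x)) := commute_nab _ hA
  have c2 : Commute (gnu x x) (clnu x (gnu y x)) := commute_nab _ hA
  have c3 : Commute (gnu x x) (gnu y y) := commute_nab _ (gnu_mem _ _)
  calc clnu x (gnu y x) * gnu y y * (gnu x x * clnu x (gnu x y))
      = (clnu x (gnu y x) * gnu y y) * gnu x x * clnu x (gnu x y) := by group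
    _ = (gnu y y * clnu x (gnu y x)) * gnu x x * clnu x (gnu x y) := by rw [c1.eq]
    _ = gnu y y * (clnu x (gnu y x) * gnu x x) * clnu x (gnu x y) := by group
    _ = gnu y y * (gnu x x * clnu x (gnu y x)) * clnu x (gnu x y) := by rw [c2.eq]
    _ = (gnu y y * gnu x x) * (clnu x (gnu y x) * clnu x (gnu x y)) := by group
    _ = (gnu x x * gnu y y) * (clnu x (gnu y x) * clnu x (gnu x y)) := by rw [c3.eq]
    _ = gnu x x * gnu y y * clnu x (knu y x) := by rw [← clnu_mul]; rfl

lemma ghlem (x y : G) : clnu x (knu x y) = clnu y (knu x y) := by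
  have h1 := nab_mul x y
  have h2 := nab_mul y x
  have h3 : gnu (x * y) (x * y) = gnu (y * x) (y * x) := by
    have := nab_gconj x (y * x)
    rwa [show x * (y * x) * x⁻¹ = x * y by group] at this
  rw [h3, h2] at h1
  have c3 : Commute (gnu y y) (gnu x x) := commute_nab _ (gnu_mem _ _)
  rw [c3.eq] at h1
  have h4 := mul_left_cancel h1
  rw [knu_sym y x] at h4
  exact h4.symm

lemma clnu_swap (a b p q : G) : clnu (a * b) (knu p q) = clnu (b * a) (knu p q) := by
  have harg : a * b = ⁅a, b⁆ * (b * a) := by rw [commutatorElement_def]; group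
  rw [harg, ← clnu_clnu, clnu_knu, z4]

lemma clnu_cancel {w : G} {X Y : Nu G} (h : clnu w X = clnu w Y) : X = Y := by
  have := congrArg (clnu w⁻¹) h
  rwa [clnu_clnu, clnu_clnu, inv_mul_cancel, clnu_id, clnu_id] at this

lemma l23 (g u h : G) :
    clnu u (knu g h) * clnu (g * g) (knu u h) = knu g h * clnu g (knu u h) := by
  have hbil : knu (g * u) h = knu g h * clnu g (knu u h) := by
    rw [knu_sym (g * u) h, knu_bil h g u, knu_sym h g, knu_sym h u]
  have h1 := ghlem (g * u) h
  rw [hbil, clnu_mul, clnu_mul, clnu_clnu, clnu_clnu] at h1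
  -- h1 : clnu (g*u) (knu g h) * clnu (g*u*g) (knu u h) = clnu h (knu g h) * clnu (h*g) (knu u h)
  have t1 : clnu (g * u) (knu g h) = clnu (h * u) (knu g h) := by
    rw [clnu_swap, ← clnu_clnu, ghlem g h, clnu_clnu, clnu_swap]
  have t2 : clnu (g * u * g) (knu u h) = clnu (h * (g * g)) (knu u h) := by
    rw [show g * u * g = g * (u * g) by group, clnu_swap, show u * g * g = u * (g * g) by group,
        clnu_swap, ← clnu_clnu, ghlem u h, clnu_clnu, clnu_swap]
  rw [t1, t2] at h1
  have h2 : clnu h (clnu u (knu g h) * clnu (g * g) (knu u h))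
      = clnu h (knu g h * clnu g (knu u h)) := by
    simp only [clnu_mul, clnu_clnu]
    exact h1
  exact clnu_cancel h2

lemma lam (g a b : G) : knu g ⁅a, b⁆ =
    knu g a * clnu a (knu g b) * (clnu b (knu g a))⁻¹ * (knu g b)⁻¹ := by
  have harg : (⁅a, b⁆ : G) = a * (b * (a⁻¹ * b⁻¹)) := by
    rw [commutatorElement_def]; group
  have e : knu g ⁅a, b⁆ = knu g a * clnu a (knu g b) *
      clnu (a * b * a⁻¹) ((knu g a)⁻¹) * clnu (a * b * a⁻¹ * b⁻¹) ((knu g b)⁻¹) := by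
    rw [harg, knu_bil g a (b * (a⁻¹ * b⁻¹)), knu_bil g b (a⁻¹ * b⁻¹),
        knu_bil g a⁻¹ b⁻¹, knu_inv g a, knu_inv g b]
    rw [clnu_mul b, clnu_mul a, clnu_mul a, clnu_clnu, clnu_clnu, clnu_clnu, clnu_clnu,
        clnu_clnu]
    group
  rw [e]
  have w1 : a * b * a⁻¹ = ⁅a, b⁆ * b := by rw [commutatorElement_def]; group
  have e2 : clnu (a * b * a⁻¹) ((knu g a)⁻¹) = (clnu b (knu g a))⁻¹ := by
    rw [w1, ← clnu_clnu, clnu_inv, clnu_knu, z4_inv, ← clnu_knu, ← clnu_inv]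
  have e3 : clnu (a * b * a⁻¹ * b⁻¹) ((knu g b)⁻¹) = (knu g b)⁻¹ := by
    rw [← commutatorElement_def, z4_inv]
  rw [e2, e3]

lemma knu_commutator (g a b : G) : knu g ⁅a, b⁆ = 1 := by
  have eq1 := l23 g b a
  have eq2 := l23 g a b
  rw [knu_sym b a] at eq1
  set P := knu g a
  set Q := knu g b
  set R := clnu g (knu a b)
  set R2 := clnu (g * g) (knu a b)
  -- eq1 : clnu b P * R2 = P * R ; eq2 : clnu a Q * R2 = Q * R
  have f1 : clnu b P = P * R * R2⁻¹ := by
    rw [eq_mul_inv_iff_mul_eq]; exact eq1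
  have f2 : clnu a Q = Q * R * R2⁻¹ := by
    rw [eq_mul_inv_iff_mul_eq]; exact eq2
  have hPQ : Commute P Q := commute_knu g a (knu_mem g b)
  rw [lam, f1, f2]
  calc P * (Q * R * R2⁻¹) * (P * R * R2⁻¹)⁻¹ * Q⁻¹ = P * Q * P⁻¹ * Q⁻¹ := by group
    _ = ⁅P, Q⁆ := (commutatorElement_def P Q).symm
    _ = 1 := commutatorElement_eq_one_iff_commute.2 hPQ

end NuAux

/-- Lemma 2.1(iii): if h ∈ G' or g ∈ G', then [g,hφ][h,gφ] = 1 in ν(G). -/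
theorem nu_comm_derived (G : Type*) [Group G] (g h : G)
    (hmem : h ∈ commutator G ∨ g ∈ commutator G) :
    ⁅nuL G g, nuR G h⁆ * ⁅nuL G h, nuR G g⁆ = 1 := by
  have key : ∀ h' : G, h' ∈ commutator G → ∀ g' : G, knu g' h' = 1 := by
    intro h' hmem'
    rw [commutator_eq_closure] at hmem'
    induction hmem' using Subgroup.closure_induction with
    | mem x hx =>
        intro g'
        obtain ⟨a, b, hab⟩ := hx
        rw [← hab]
        exact knu_commutator g' a b
    | one => intro g'; exact knu_one_right g'
    | mul x y hx hy ihx ihy =>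
        intro g'
        rw [knu_bil, ihx g', ihy g', clnu_one, one_mul]
    | inv x hx ihx =>
        intro g'
        rw [knu_inv, ihx g', inv_one, clnu_one]
  show knu g h = 1
  rcases hmem with hh | hg
  · exact key h hh g
  · exact (knu_sym g h).trans (key g hg h)
end

section
/- In ν(G), for all g, h, x, y ∈ G one has [[g,hφ],[x,yφ]] = [[g,h],[x,y]φ]. -/
open Monoid Subgroup
open scoped commutatorElement

namespace NuCommProof

variable (G : Type*) [Group G]

/-- Conjugation, `cj k a = k * a * k⁻¹`. -/
def cj {G : Type*} [Group G] (k a : G) : G := k * a * k⁻¹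

/-- The basic commutators `[g, hφ]`. -/
def ccc (a b : G) : Nu G := ⁅nuL G a, nuR G b⁆

/-- The folding homomorphism π : ν(G) → G, with π ∘ nuL = π ∘ nuR = id. -/
def piNu : Nu G →* G :=
  QuotientGroup.lift (Subgroup.normalClosure (nuRels G))
    (Coprod.lift (MonoidHom.id G) (MonoidHom.id G)) (by
      have hle : Subgroup.normalClosure (nuRels G) ≤
          (Coprod.lift (MonoidHom.id G) (MonoidHom.id G)).ker := by
        apply Subgroup.normalClosure_le_normal
        rintro r ⟨g, h, k, (rfl | rfl)⟩ <;>
        · rw [SetLike.mem_coe, MonoidHom.mem_ker]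
          simp only [commutatorElement_def, map_mul, map_inv,
            Coprod.lift_apply_inl, Coprod.lift_apply_inr, MonoidHom.id_apply]
          group
      exact fun x hx => hle hx)

variable {G}

lemma piNu_L (a : G) : piNu G (nuL G a) = a := rfl

lemma piNu_R (a : G) : piNu G (nuR G a) = a := rfl

lemma cc_ext {a a' b b' : G} (ha : a = a') (hb : b = b') : ccc G a b = ccc G a' b' := by
  rw [ha, hb]

lemma piNu_cc (a b : G) : piNu G (ccc G a b) = ⁅a, b⁆ := by
  rw [ccc, map_commutatorElement, piNu_L, piNu_R]

/-- The defining relation, `L`-version. -/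
lemma rel_l (g h k : G) :
    (nuL G k)⁻¹ * ccc G g h * nuL G k = ccc G (k⁻¹ * g * k) (k⁻¹ * h * k) := by
  have hm : ((Coprod.inl k)⁻¹ * ⁅(Coprod.inl g : Coprod G G), Coprod.inr h⁆ * Coprod.inl k) *
      (⁅(Coprod.inl (k⁻¹ * g * k) : Coprod G G), Coprod.inr (k⁻¹ * h * k)⁆)⁻¹ ∈
      Subgroup.normalClosure (nuRels G) :=
    Subgroup.subset_normalClosure ⟨g, h, k, Or.inl rfl⟩
  have h1 : (QuotientGroup.mk' (Subgroup.normalClosure (nuRels G)))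
      (((Coprod.inl k)⁻¹ * ⁅(Coprod.inl g : Coprod G G), Coprod.inr h⁆ * Coprod.inl k) *
        (⁅(Coprod.inl (k⁻¹ * g * k) : Coprod G G), Coprod.inr (k⁻¹ * h * k)⁆)⁻¹) = 1 :=
    (QuotientGroup.eq_one_iff _).mpr hm
  rw [map_mul, map_inv, mul_inv_eq_one, map_mul, map_mul, map_inv,
    map_commutatorElement, map_commutatorElement] at h1
  exact h1

/-- The defining relation, `R`-version. -/
lemma rel_r (g h k : G) :
    (nuR G k)⁻¹ * ccc G g h * nuR G k = ccc G (k⁻¹ * g * k) (k⁻¹ * h * k) := by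
  have hm : ((Coprod.inr k)⁻¹ * ⁅(Coprod.inl g : Coprod G G), Coprod.inr h⁆ * Coprod.inr k) *
      (⁅(Coprod.inl (k⁻¹ * g * k) : Coprod G G), Coprod.inr (k⁻¹ * h * k)⁆)⁻¹ ∈
      Subgroup.normalClosure (nuRels G) :=
    Subgroup.subset_normalClosure ⟨g, h, k, Or.inr rfl⟩
  have h1 : (QuotientGroup.mk' (Subgroup.normalClosure (nuRels G)))
      (((Coprod.inr k)⁻¹ * ⁅(Coprod.inl g : Coprod G G), Coprod.inr h⁆ * Coprod.inr k) *
        (⁅(Coprod.inl (k⁻¹ * g * k) : Coprod G G), Coprod.inr (k⁻¹ * h * k)⁆)⁻¹) = 1 :=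
    (QuotientGroup.eq_one_iff _).mpr hm
  rw [map_mul, map_inv, mul_inv_eq_one, map_mul, map_mul, map_inv,
    map_commutatorElement, map_commutatorElement] at h1
  exact h1

lemma conj_L (k a b : G) :
    nuL G k * ccc G a b * (nuL G k)⁻¹ = ccc G (cj k a) (cj k b) := by
  have h := rel_l a b k⁻¹
  rw [map_inv, inv_inv, inv_inv] at h
  simpa only [cj] using h

lemma conj_R (k a b : G) :
    nuR G k * ccc G a b * (nuR G k)⁻¹ = ccc G (cj k a) (cj k b) := by
  have h := rel_r a b k⁻¹
  rw [map_inv, inv_inv, inv_inv] at h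
  simpa only [cj] using h

/-- Conjugation of a basic commutator by an arbitrary element acts through π. -/
lemma conj_cc (u : Nu G) (a b : G) :
    u * ccc G a b * u⁻¹ = ccc G (cj (piNu G u) a) (cj (piNu G u) b) := by
  obtain ⟨v, rfl⟩ := QuotientGroup.mk'_surjective (Subgroup.normalClosure (nuRels G)) u
  induction v using Coprod.induction_on generalizing a b with
  | inl m =>
    have hm : (QuotientGroup.mk' (Subgroup.normalClosure (nuRels G))) (Coprod.inl m) =
        nuL G m := rfl
    rw [hm, conj_L, piNu_L]
  | inr m =>
    have hm : (QuotientGroup.mk' (Subgroup.normalClosure (nuRels G))) (Coprod.inr m) =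
        nuR G m := rfl
    rw [hm, conj_R, piNu_R]
  | mul p q hp hq =>
    rw [map_mul]
    have key : ∀ P Q : Nu G,
        (∀ a b : G, P * ccc G a b * P⁻¹ = ccc G (cj (piNu G P) a) (cj (piNu G P) b)) →
        (∀ a b : G, Q * ccc G a b * Q⁻¹ = ccc G (cj (piNu G Q) a) (cj (piNu G Q) b)) →
        P * Q * ccc G a b * (P * Q)⁻¹ = ccc G (cj (piNu G (P * Q)) a) (cj (piNu G (P * Q)) b) := by
      intro P Q hp hq
      rw [mul_inv_rev]
      calc P * Q * ccc G a b * (Q⁻¹ * P⁻¹)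
          = P * (Q * ccc G a b * Q⁻¹) * P⁻¹ := by group
        _ = P * ccc G (cj (piNu G Q) a) (cj (piNu G Q) b) * P⁻¹ := by
              rw [hq]
        _ = _ := by
              rw [hp, map_mul]
              exact cc_ext (by simp only [cj]; group) (by simp only [cj]; group)
    exact key _ _ hp hq

variable (G)

/-- The subgroup generated by the basic commutators (corresponds to `G ⊗ G`). -/
def Dsub : Subgroup (Nu G) := Subgroup.closure { z | ∃ a b : G, z = ccc G a b }

variable {G}

lemma cc_mem (a b : G) : ccc G a b ∈ Dsub G := Subgroup.subset_closure ⟨a, b, rfl⟩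

/-- Two elements with equal π-image conjugate the subgroup D in the same way. -/
lemma conj_eq_of_pi_eq {u v : Nu G} (h : piNu G u = piNu G v) {η : Nu G} (hη : η ∈ Dsub G) :
    u * η * u⁻¹ = v * η * v⁻¹ := by
  refine Subgroup.closure_induction (fun z hz => ?_) ?_ (fun z w _ _ ihz ihw => ?_)
    (fun z _ ihz => ?_) hη
  · obtain ⟨a, b, rfl⟩ := hz
    rw [conj_cc, conj_cc, h]
  · simp
  · calc u * (z * w) * u⁻¹ = (u * z * u⁻¹) * (u * w * u⁻¹) := by group
      _ = (v * z * v⁻¹) * (v * w * v⁻¹) := by rw [ihz, ihw]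
      _ = v * (z * w) * v⁻¹ := by group
  · calc u * z⁻¹ * u⁻¹ = (u * z * u⁻¹)⁻¹ := by group
      _ = (v * z * v⁻¹)⁻¹ := by rw [ihz]
      _ = v * z⁻¹ * v⁻¹ := by group

/-- Any element with trivial π-image commutes with every element of D. -/
lemma commute_of_pi_one {ξ : Nu G} (h : piNu G ξ = 1) {η : Nu G} (hη : η ∈ Dsub G) :
    ξ * η = η * ξ := by
  have h1 : piNu G ξ = piNu G (1 : Nu G) := by simpa using h
  have h2 := conj_eq_of_pi_eq h1 hη
  simp only [one_mul, inv_one, mul_one] at h2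
  calc ξ * η = (ξ * η * ξ⁻¹) * ξ := by group
    _ = η * ξ := by rw [h2]

/-- Expansion in the first slot. -/
lemma E1 (a b z : G) :
    ccc G (a * b) z = ccc G (cj a b) (cj a z) * ccc G a z := by
  have h1 : ccc G (a * b) z = nuL G a * ccc G b z * (nuL G a)⁻¹ * ccc G a z := by
    simp only [ccc, map_mul, commutatorElement_def]
    group
  rw [h1, conj_L]

/-- Expansion in the second slot. -/
lemma F1 (a b z : G) :
    ccc G a (b * z) = ccc G a b * ccc G (cj b a) (cj b z) := by
  have h1 : ccc G a (b * z) = ccc G a b * (nuR G b * ccc G a z * (nuR G b)⁻¹) := by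
    simp only [ccc, map_mul, commutatorElement_def]
    group
  rw [h1, conj_R]

lemma cc_one_right (a : G) : ccc G a 1 = 1 := by
  simp [ccc]

lemma cc_one_left (z : G) : ccc G 1 z = 1 := by
  simp [ccc]

/-- `[a m a⁻¹, a⁻¹] = [m, a]⁻¹`. -/
lemma F2 (m a : G) : ccc G (cj a m) a⁻¹ = (ccc G m a)⁻¹ := by
  have h := F1 m a a⁻¹
  rw [mul_inv_cancel, cc_one_right] at h
  rw [show cj a a⁻¹ = a⁻¹ from by simp only [cj]; group] at h
  have h2 : ccc G m a * ccc G (cj a m) a⁻¹ = 1 := h.symm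
  calc ccc G (cj a m) a⁻¹
      = (ccc G m a)⁻¹ * (ccc G m a * ccc G (cj a m) a⁻¹) := by group
    _ = (ccc G m a)⁻¹ * 1 := by rw [h2]
    _ = (ccc G m a)⁻¹ := by group

variable (G)

/-- The defect `δ(w; x, y) = [wxw⁻¹,(wyw⁻¹)φ]⁻¹ · [w,[x,y]φ] · [x,yφ]`. -/
def dd (x y w : G) : Nu G :=
  (ccc G (cj w x) (cj w y))⁻¹ * ccc G w ⁅x, y⁆ * ccc G x y

variable {G}

lemma dd_mem (x y w : G) : dd G x y w ∈ Dsub G :=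
  mul_mem (mul_mem (inv_mem (cc_mem _ _)) (cc_mem _ _)) (cc_mem _ _)

lemma pi_dd (x y w : G) : piNu G (dd G x y w) = 1 := by
  simp only [dd, map_mul, map_inv, piNu_cc, commutatorElement_def, cj]
  group

lemma dd_comm_cc (x y w a b : G) : dd G x y w * ccc G a b = ccc G a b * dd G x y w :=
  commute_of_pi_one (pi_dd x y w) (cc_mem a b)

/-- Cocycle law in `w`. -/
lemma dd_mul (x y a b : G) :
    dd G x y (a * b) = nuL G a * dd G x y b * (nuL G a)⁻¹ * dd G x y a := by
  have hconj : nuL G a * dd G x y b * (nuL G a)⁻¹ =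
      (ccc G (cj a (cj b x)) (cj a (cj b y)))⁻¹ * ccc G (cj a b) (cj a ⁅x, y⁆) *
        ccc G (cj a x) (cj a y) := by
    calc nuL G a * dd G x y b * (nuL G a)⁻¹
        = (nuL G a * ccc G (cj b x) (cj b y) * (nuL G a)⁻¹)⁻¹ *
            (nuL G a * ccc G b ⁅x, y⁆ * (nuL G a)⁻¹) *
            (nuL G a * ccc G x y * (nuL G a)⁻¹) := by
          simp only [dd]; group
      _ = _ := by rw [conj_L, conj_L, conj_L]
  rw [hconj]
  simp only [dd]
  rw [E1 a b ⁅x, y⁆]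
  rw [show cj a (cj b x) = cj (a * b) x from by simp only [cj]; group,
      show cj a (cj b y) = cj (a * b) y from by simp only [cj]; group]
  group

lemma dd_one (x y : G) : dd G x y 1 = 1 := by
  simp only [dd, cj, cc_one_left]
  simp only [one_mul, inv_one, mul_one]
  group

lemma dd_inv (x y a : G) :
    dd G x y a⁻¹ = (nuL G a)⁻¹ * (dd G x y a)⁻¹ * nuL G a := by
  have h := dd_mul x y a a⁻¹
  rw [mul_inv_cancel, dd_one] at h
  have h2 : nuL G a * dd G x y a⁻¹ * (nuL G a)⁻¹ * dd G x y a = 1 := h.symm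
  calc dd G x y a⁻¹
      = (nuL G a)⁻¹ * (nuL G a * dd G x y a⁻¹ * (nuL G a)⁻¹ * dd G x y a) *
          ((dd G x y a)⁻¹ * nuL G a) := by group
    _ = (nuL G a)⁻¹ * 1 * ((dd G x y a)⁻¹ * nuL G a) := by rw [h2]
    _ = _ := by group

/-- Conjugation invariance of the defect in the `w` slot (the key lemma). -/
lemma dd_conj (x y a w : G) : dd G x y (cj a w) = dd G x y w := by
  have s1 : ccc G (cj a w) ⁅x, y⁆ =
      ccc G (cj a w) a⁻¹ * (ccc G w ⁅x, y⁆ * ccc G (cj ⁅x, y⁆ w) (cj ⁅x, y⁆ a)) := by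
    have h1 := F1 (cj a w) a⁻¹ (a * ⁅x, y⁆)
    rw [show a⁻¹ * (a * ⁅x, y⁆) = ⁅x, y⁆ from by group] at h1
    rw [show cj a⁻¹ (cj a w) = w from by simp only [cj]; group] at h1
    rw [show cj a⁻¹ (a * ⁅x, y⁆) = ⁅x, y⁆ * a from by simp only [cj]; group] at h1
    rw [h1, F1 w ⁅x, y⁆ a]
  have s2 : ccc G (cj ⁅x, y⁆ w) (cj ⁅x, y⁆ a) = ccc G x y * ccc G w a * (ccc G x y)⁻¹ := by
    rw [← conj_R ⁅x, y⁆ w a]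
    exact conj_eq_of_pi_eq (by rw [piNu_R, piNu_cc]) (cc_mem w a)
  have s3 : ccc G (cj a w) a⁻¹ = (ccc G w a)⁻¹ := F2 w a
  have s4 : (ccc G w a)⁻¹ * ccc G (cj w x) (cj w y) * ccc G w a =
      ccc G (cj (cj a w) x) (cj (cj a w) y) := by
    have h1 := conj_cc (ccc G w a)⁻¹ (cj w x) (cj w y)
    rw [inv_inv] at h1
    rw [h1, map_inv, piNu_cc]
    exact cc_ext (by simp only [cj, commutatorElement_def]; group)
      (by simp only [cj, commutatorElement_def]; group)
  have s5 : ccc G w ⁅x, y⁆ * ccc G x y = ccc G (cj w x) (cj w y) * dd G x y w := by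
    simp only [dd]; group
  have hcm : dd G x y w * ccc G w a = ccc G w a * dd G x y w := dd_comm_cc x y w w a
  calc dd G x y (cj a w)
      = (ccc G (cj (cj a w) x) (cj (cj a w) y))⁻¹ * ccc G (cj a w) ⁅x, y⁆ *
          ccc G x y := rfl
    _ = (ccc G (cj (cj a w) x) (cj (cj a w) y))⁻¹ *
          (ccc G (cj a w) a⁻¹ * (ccc G w ⁅x, y⁆ * ccc G (cj ⁅x, y⁆ w) (cj ⁅x, y⁆ a))) *
          ccc G x y := by rw [s1]
    _ = (ccc G (cj (cj a w) x) (cj (cj a w) y))⁻¹ *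
          ((ccc G w a)⁻¹ * (ccc G w ⁅x, y⁆ * (ccc G x y * ccc G w a * (ccc G x y)⁻¹))) *
          ccc G x y := by rw [s2, s3]
    _ = (ccc G (cj (cj a w) x) (cj (cj a w) y))⁻¹ * (ccc G w a)⁻¹ *
          (ccc G w ⁅x, y⁆ * ccc G x y) * ccc G w a := by group
    _ = (ccc G (cj (cj a w) x) (cj (cj a w) y))⁻¹ * (ccc G w a)⁻¹ *
          (ccc G (cj w x) (cj w y) * dd G x y w) * ccc G w a := by rw [s5]
    _ = (ccc G (cj (cj a w) x) (cj (cj a w) y))⁻¹ * (ccc G w a)⁻¹ *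
          ccc G (cj w x) (cj w y) * (dd G x y w * ccc G w a) := by group
    _ = (ccc G (cj (cj a w) x) (cj (cj a w) y))⁻¹ * (ccc G w a)⁻¹ *
          ccc G (cj w x) (cj w y) * (ccc G w a * dd G x y w) := by rw [hcm]
    _ = (ccc G (cj (cj a w) x) (cj (cj a w) y))⁻¹ *
          ((ccc G w a)⁻¹ * ccc G (cj w x) (cj w y) * ccc G w a) * dd G x y w := by group
    _ = (ccc G (cj (cj a w) x) (cj (cj a w) y))⁻¹ *
          ccc G (cj (cj a w) x) (cj (cj a w) y) * dd G x y w := by rw [s4]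
    _ = dd G x y w := by group

/-- δ(gh) = δ(hg). -/
lemma dd_swap (x y g h : G) : dd G x y (g * h) = dd G x y (h * g) := by
  have h1 := dd_conj x y h (g * h)
  rw [show cj h (g * h) = h * g from by simp only [cj]; group] at h1
  exact h1.symm

/-- The main vanishing: δ([g,h]) = 1. -/
lemma dd_comm_vanish (x y g h : G) : dd G x y ⁅g, h⁆ = 1 := by
  have e : ⁅g, h⁆ = (g * h) * (h * g)⁻¹ := by simp only [commutatorElement_def]; group
  rw [e, dd_mul, dd_inv, dd_swap x y g h]
  have hpi : piNu G (nuL G ((g * h) * (h * g)⁻¹)) = piNu G (ccc G g h) := by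
    rw [piNu_L, piNu_cc]
    simp only [commutatorElement_def]; group
  have hconj : nuL G ((g * h) * (h * g)⁻¹) * (dd G x y (h * g))⁻¹ *
      (nuL G ((g * h) * (h * g)⁻¹))⁻¹ =
      ccc G g h * (dd G x y (h * g))⁻¹ * (ccc G g h)⁻¹ :=
    conj_eq_of_pi_eq hpi (inv_mem (dd_mem x y (h * g)))
  have hcomm : ccc G g h * (dd G x y (h * g))⁻¹ * (ccc G g h)⁻¹ = (dd G x y (h * g))⁻¹ := by
    have hc : dd G x y (h * g) * ccc G g h = ccc G g h * dd G x y (h * g) :=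
      dd_comm_cc x y (h * g) g h
    calc ccc G g h * (dd G x y (h * g))⁻¹ * (ccc G g h)⁻¹
        = (dd G x y (h * g))⁻¹ * (dd G x y (h * g) * ccc G g h) * (dd G x y (h * g))⁻¹ *
            (ccc G g h)⁻¹ := by group
      _ = (dd G x y (h * g))⁻¹ * (ccc G g h * dd G x y (h * g)) * (dd G x y (h * g))⁻¹ *
            (ccc G g h)⁻¹ := by rw [hc]
      _ = (dd G x y (h * g))⁻¹ * (ccc G g h * (ccc G g h)⁻¹) := by group
      _ = _ := by group
  have hL : nuL G (g * h) * (nuL G (h * g))⁻¹ * (dd G x y (h * g))⁻¹ * nuL G (h * g) *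
      (nuL G (g * h))⁻¹ * dd G x y (h * g) =
      nuL G ((g * h) * (h * g)⁻¹) * (dd G x y (h * g))⁻¹ *
        (nuL G ((g * h) * (h * g)⁻¹))⁻¹ * dd G x y (h * g) := by
    simp only [map_mul, map_inv]; group
  calc nuL G (g * h) * ((nuL G (h * g))⁻¹ * (dd G x y (h * g))⁻¹ * nuL G (h * g)) *
        (nuL G (g * h))⁻¹ * dd G x y (h * g)
      = nuL G (g * h) * (nuL G (h * g))⁻¹ * (dd G x y (h * g))⁻¹ * nuL G (h * g) *
          (nuL G (g * h))⁻¹ * dd G x y (h * g) := by group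
    _ = nuL G ((g * h) * (h * g)⁻¹) * (dd G x y (h * g))⁻¹ *
          (nuL G ((g * h) * (h * g)⁻¹))⁻¹ * dd G x y (h * g) := hL
    _ = (dd G x y (h * g))⁻¹ * dd G x y (h * g) := by rw [hconj, hcomm]
    _ = 1 := by group

end NuCommProof

open NuCommProof

/-- Lemma 2.1(v): [[g,hφ],[x,yφ]] = [[g,h],[x,y]φ] in ν(G). -/
theorem nu_comm_comm (G : Type*) [Group G] (g h x y : G) :
    ⁅⁅nuL G g, nuR G h⁆, ⁅nuL G x, nuR G y⁆⁆ = ⁅⁅nuL G g, nuL G h⁆, nuR G ⁅x, y⁆⁆ := by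
  have hd := dd_comm_vanish (G := G) x y g h
  simp only [dd] at hd
  have h1 : ccc G ⁅g, h⁆ ⁅x, y⁆ =
      ccc G (cj ⁅g, h⁆ x) (cj ⁅g, h⁆ y) * (ccc G x y)⁻¹ := by
    calc ccc G ⁅g, h⁆ ⁅x, y⁆
        = ccc G (cj ⁅g, h⁆ x) (cj ⁅g, h⁆ y) *
            ((ccc G (cj ⁅g, h⁆ x) (cj ⁅g, h⁆ y))⁻¹ * ccc G ⁅g, h⁆ ⁅x, y⁆ * ccc G x y) *
            (ccc G x y)⁻¹ := by group
      _ = ccc G (cj ⁅g, h⁆ x) (cj ⁅g, h⁆ y) * 1 * (ccc G x y)⁻¹ := by rw [hd]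
      _ = _ := by group
  have h2 : ccc G (cj ⁅g, h⁆ x) (cj ⁅g, h⁆ y) =
      ccc G g h * ccc G x y * (ccc G g h)⁻¹ := by
    have h3 := conj_cc (ccc G g h) x y
    rw [piNu_cc] at h3
    exact h3.symm
  calc ⁅⁅nuL G g, nuR G h⁆, ⁅nuL G x, nuR G y⁆⁆
      = ccc G g h * ccc G x y * (ccc G g h)⁻¹ * (ccc G x y)⁻¹ := by
        simp only [ccc, commutatorElement_def]
    _ = ccc G (cj ⁅g, h⁆ x) (cj ⁅g, h⁆ y) * (ccc G x y)⁻¹ := by rw [h2]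
    _ = ccc G ⁅g, h⁆ ⁅x, y⁆ := h1.symm
    _ = ⁅⁅nuL G g, nuL G h⁆, nuR G ⁅x, y⁆⁆ := by rw [ccc, ← map_commutatorElement]
end

section
/- In ν(G), the conjugate of [g,hφ] by [x,yφ] equals the conjugate of [g,hφ] by [x,y], for all g,h,x,y ∈ G. -/
open Monoid Subgroup
open scoped commutatorElement

private def nconj {H : Type*} [Group H] (u c : H) : H := u⁻¹ * c * u

private lemma nconj_comm {H : Type*} [Group H] (u v c : H) :
    ⁅u, v⁆⁻¹ * c * ⁅u, v⁆ = nconj v⁻¹ (nconj u⁻¹ (nconj v (nconj u c))) := by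
  simp only [nconj, commutatorElement_def]; group

lemma nu_relL (G : Type*) [Group G] (g h k : G) :
    nconj (nuL G k) ⁅nuL G g, nuR G h⁆ =
      ⁅nuL G (k⁻¹ * g * k), nuR G (k⁻¹ * h * k)⁆ := by
  have hm : ((Coprod.inl k)⁻¹ * ⁅(Coprod.inl g : Coprod G G), Coprod.inr h⁆ * Coprod.inl k) *
      (⁅(Coprod.inl (k⁻¹ * g * k) : Coprod G G), Coprod.inr (k⁻¹ * h * k)⁆)⁻¹ ∈
      Subgroup.normalClosure (nuRels G) :=
    Subgroup.subset_normalClosure ⟨g, h, k, Or.inl rfl⟩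
  have h1 : (QuotientGroup.mk' (Subgroup.normalClosure (nuRels G)))
        ((Coprod.inl k)⁻¹ * ⁅(Coprod.inl g : Coprod G G), Coprod.inr h⁆ * Coprod.inl k) =
      (QuotientGroup.mk' (Subgroup.normalClosure (nuRels G)))
        ⁅(Coprod.inl (k⁻¹ * g * k) : Coprod G G), Coprod.inr (k⁻¹ * h * k)⁆ := by
    rw [← mul_inv_eq_one, ← map_inv (QuotientGroup.mk' (Subgroup.normalClosure (nuRels G))), ← map_mul (QuotientGroup.mk' (Subgroup.normalClosure (nuRels G)))]
    exact (QuotientGroup.eq_one_iff _).mpr hm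
  simp only [map_mul, map_inv, map_commutatorElement] at h1
  simp only [nconj, map_mul, map_inv]
  exact h1

lemma nu_relR (G : Type*) [Group G] (g h k : G) :
    nconj (nuR G k) ⁅nuL G g, nuR G h⁆ =
      ⁅nuL G (k⁻¹ * g * k), nuR G (k⁻¹ * h * k)⁆ := by
  have hm : ((Coprod.inr k)⁻¹ * ⁅(Coprod.inl g : Coprod G G), Coprod.inr h⁆ * Coprod.inr k) *
      (⁅(Coprod.inl (k⁻¹ * g * k) : Coprod G G), Coprod.inr (k⁻¹ * h * k)⁆)⁻¹ ∈
      Subgroup.normalClosure (nuRels G) :=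
    Subgroup.subset_normalClosure ⟨g, h, k, Or.inr rfl⟩
  have h1 : (QuotientGroup.mk' (Subgroup.normalClosure (nuRels G)))
        ((Coprod.inr k)⁻¹ * ⁅(Coprod.inl g : Coprod G G), Coprod.inr h⁆ * Coprod.inr k) =
      (QuotientGroup.mk' (Subgroup.normalClosure (nuRels G)))
        ⁅(Coprod.inl (k⁻¹ * g * k) : Coprod G G), Coprod.inr (k⁻¹ * h * k)⁆ := by
    rw [← mul_inv_eq_one, ← map_inv (QuotientGroup.mk' (Subgroup.normalClosure (nuRels G))), ← map_mul (QuotientGroup.mk' (Subgroup.normalClosure (nuRels G)))]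
    exact (QuotientGroup.eq_one_iff _).mpr hm
  simp only [map_mul, map_inv, map_commutatorElement] at h1
  simp only [nconj, map_mul, map_inv]
  exact h1

/-- Lemma 2.1(i): conjugation of [g,hφ] by [x,yφ] equals conjugation by [x,y]. -/
theorem nu_conj (G : Type*) [Group G] (g h x y : G) :
    ⁅nuL G x, nuR G y⁆⁻¹ * ⁅nuL G g, nuR G h⁆ * ⁅nuL G x, nuR G y⁆ =
      ⁅nuL G x, nuL G y⁆⁻¹ * ⁅nuL G g, nuR G h⁆ * ⁅nuL G x, nuL G y⁆ := by
  rw [nconj_comm, nconj_comm]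
  rw [← map_inv (nuL G) x, ← map_inv (nuR G) y, ← map_inv (nuL G) y]
  simp only [nu_relL, nu_relR]
end

section
/- The subgroup Υ(G) = [G, Gφ] of ν(G) is normal in ν(G), and ν(G) decomposes as the iterated semidirect product ([G,Gφ]⋊G)⋊Gφ. -/
open Monoid Subgroup
open scoped commutatorElement

section Aux

variable {N : Type*} [Group N] {A B : Subgroup N}

/-- Conjugating a commutator generator by an element of `A` stays in `⁅A,B⁆`. -/
lemma conjA_commutator_mem {a x y : N} (ha : a ∈ A) (hx : x ∈ A) (hy : y ∈ B) :
    a * ⁅x, y⁆ * a⁻¹ ∈ ⁅A, B⁆ := by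
  have hid : a * ⁅x, y⁆ * a⁻¹ = ⁅a * x, y⁆ * ⁅a, y⁆⁻¹ := by
    simp only [commutatorElement_def]; group
  rw [hid]
  exact mul_mem (commutator_mem_commutator (mul_mem ha hx) hy)
    (inv_mem (commutator_mem_commutator ha hy))

/-- Conjugating a commutator generator by an element of `B` stays in `⁅A,B⁆`. -/
lemma conjB_commutator_mem {b x y : N} (hb : b ∈ B) (hx : x ∈ A) (hy : y ∈ B) :
    b * ⁅x, y⁆ * b⁻¹ ∈ ⁅A, B⁆ := by
  have hid : b * ⁅x, y⁆ * b⁻¹ = ⁅x, b⁆⁻¹ * ⁅x, b * y⁆ := by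
    simp only [commutatorElement_def]; group
  rw [hid]
  exact mul_mem (inv_mem (commutator_mem_commutator hx hb))
    (commutator_mem_commutator hx (mul_mem hb hy))

lemma conj_mem_commutator {g : N}
    (hg : ∀ x ∈ A, ∀ y ∈ B, g * ⁅x, y⁆ * g⁻¹ ∈ ⁅A, B⁆) :
    ∀ n ∈ ⁅A, B⁆, g * n * g⁻¹ ∈ ⁅A, B⁆ := by
  have h : ⁅A, B⁆ ≤ Subgroup.comap ((MulAut.conj g).toMonoidHom) ⁅A, B⁆ := by
    rw [Subgroup.commutator_def, Subgroup.closure_le]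
    rintro _ ⟨x, hx, y, hy, rfl⟩
    rw [← Subgroup.commutator_def]
    exact hg x hx y hy
  intro n hn
  simpa [MulAut.conj_apply, mul_assoc] using h hn

lemma mem_normalizer_of_conj {g : N} {H : Subgroup N}
    (h₁ : ∀ n ∈ H, g * n * g⁻¹ ∈ H) (h₂ : ∀ n ∈ H, g⁻¹ * n * g⁻¹⁻¹ ∈ H) :
    g ∈ normalizer (H : Set N) := by
  rw [Subgroup.mem_normalizer_iff]
  intro n
  constructor
  · exact fun hn => h₁ n hn
  · intro hn
    have := h₂ _ hn
    simpa [mul_assoc] using this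

lemma A_le_normalizer : A ≤ normalizer ((⁅A, B⁆ : Subgroup N) : Set N) := by
  intro a ha
  exact mem_normalizer_of_conj
    (conj_mem_commutator fun x hx y hy => conjA_commutator_mem ha hx hy)
    (conj_mem_commutator fun x hx y hy => conjA_commutator_mem (inv_mem ha) hx hy)

lemma B_le_normalizer : B ≤ normalizer ((⁅A, B⁆ : Subgroup N) : Set N) := by
  intro b hb
  exact mem_normalizer_of_conj
    (conj_mem_commutator fun x hx y hy => conjB_commutator_mem hb hx hy)
    (conj_mem_commutator fun x hx y hy => conjB_commutator_mem (inv_mem hb) hx hy)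

lemma commutator_normal_of_sup (h : A ⊔ B = ⊤) : (⁅A, B⁆ : Subgroup N).Normal := by
  rw [← Subgroup.normalizer_eq_top_iff, eq_top_iff, ← h]
  exact sup_le A_le_normalizer B_le_normalizer

lemma conj_mem_sup {g : N}
    (hK : ∀ n ∈ ⁅A, B⁆, g * n * g⁻¹ ∈ ⁅A, B⁆ ⊔ A)
    (hA : ∀ a ∈ A, g * a * g⁻¹ ∈ ⁅A, B⁆ ⊔ A) :
    ∀ n ∈ ⁅A, B⁆ ⊔ A, g * n * g⁻¹ ∈ ⁅A, B⁆ ⊔ A := by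
  have h : ⁅A, B⁆ ⊔ A ≤ Subgroup.comap ((MulAut.conj g).toMonoidHom) (⁅A, B⁆ ⊔ A) := by
    refine sup_le ?_ ?_
    · intro n hn; simpa [MulAut.conj_apply, mul_assoc] using hK n hn
    · intro a ha; simpa [MulAut.conj_apply, mul_assoc] using hA a ha
  intro n hn
  simpa [MulAut.conj_apply, mul_assoc] using h hn

lemma sup_normal_of_sup (h : A ⊔ B = ⊤) : (⁅A, B⁆ ⊔ A : Subgroup N).Normal := by
  rw [← Subgroup.normalizer_eq_top_iff, eq_top_iff, ← h]
  have hA : A ≤ normalizer ((⁅A, B⁆ ⊔ A : Subgroup N) : Set N) := by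
    intro a ha
    have key : ∀ c ∈ A, ∀ n ∈ ⁅A, B⁆ ⊔ A, c * n * c⁻¹ ∈ ⁅A, B⁆ ⊔ A := by
      intro c hc
      refine conj_mem_sup (fun n hn => ?_) (fun x hx => ?_)
      · exact Subgroup.mem_sup_left (conj_mem_commutator
          (fun u hu v hv => conjA_commutator_mem hc hu hv) n hn)
      · exact Subgroup.mem_sup_right (mul_mem (mul_mem hc hx) (inv_mem hc))
    exact mem_normalizer_of_conj (key a ha) (key a⁻¹ (inv_mem ha))
  have hB : B ≤ normalizer ((⁅A, B⁆ ⊔ A : Subgroup N) : Set N) := by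
    intro b hb
    have key : ∀ c ∈ B, ∀ n ∈ ⁅A, B⁆ ⊔ A, c * n * c⁻¹ ∈ ⁅A, B⁆ ⊔ A := by
      intro c hc
      refine conj_mem_sup (fun n hn => ?_) (fun x hx => ?_)
      · exact Subgroup.mem_sup_left (conj_mem_commutator
          (fun u hu v hv => conjB_commutator_mem hc hu hv) n hn)
      · have hid : c * x * c⁻¹ = ⁅x, c⁆⁻¹ * x := by
          simp only [commutatorElement_def]; group
        rw [hid]
        exact mul_mem (Subgroup.mem_sup_left (inv_mem (commutator_mem_commutator hx hc)))
          (Subgroup.mem_sup_right hx)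
    exact mem_normalizer_of_conj (key b hb) (key b⁻¹ (inv_mem hb))
  exact sup_le hA hB

end Aux

section Proj

variable (G : Type*) [Group G]

/-- Projection of the free product onto the first copy of `G`. -/
def nuProjL' : Coprod G G →* G := Coprod.lift (MonoidHom.id G) 1

/-- Projection of the free product onto the second copy of `G`. -/
def nuProjR' : Coprod G G →* G := Coprod.lift 1 (MonoidHom.id G)

lemma nuRels_le_ker_projL : Subgroup.normalClosure (nuRels G) ≤ (nuProjL' G).ker := by
  refine Subgroup.normalClosure_le_normal ?_
  rintro r ⟨g, h, k, hr | hr⟩ <;>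
    · simp [hr, nuProjL', MonoidHom.mem_ker, commutatorElement_def,
        Coprod.lift_apply_inl, Coprod.lift_apply_inr]

lemma nuRels_le_ker_projR : Subgroup.normalClosure (nuRels G) ≤ (nuProjR' G).ker := by
  refine Subgroup.normalClosure_le_normal ?_
  rintro r ⟨g, h, k, hr | hr⟩ <;>
    · simp [hr, nuProjR', MonoidHom.mem_ker, commutatorElement_def,
        Coprod.lift_apply_inl, Coprod.lift_apply_inr]

/-- The projection ν(G) → G killing the copy `Gφ`. -/
def nuProjL : Nu G →* G :=
  QuotientGroup.lift _ (nuProjL' G) (nuRels_le_ker_projL G)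

/-- The projection ν(G) → G killing the copy `G`. -/
def nuProjR : Nu G →* G :=
  QuotientGroup.lift _ (nuProjR' G) (nuRels_le_ker_projR G)

@[simp] lemma nuProjL_nuL (g : G) : nuProjL G (nuL G g) = g := rfl

@[simp] lemma nuProjL_nuR (g : G) : nuProjL G (nuR G g) = 1 := rfl

@[simp] lemma nuProjR_nuL (g : G) : nuProjR G (nuL G g) = 1 := rfl

@[simp] lemma nuProjR_nuR (g : G) : nuProjR G (nuR G g) = g := rfl

lemma nu_sup_eq_top : (nuL G).range ⊔ (nuR G).range = ⊤ := by
  have h1 : (nuL G).range = Subgroup.map (QuotientGroup.mk' (normalClosure (nuRels G)))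
      (Coprod.inl : G →* Coprod G G).range := MonoidHom.range_comp _ _
  have h2 : (nuR G).range = Subgroup.map (QuotientGroup.mk' (normalClosure (nuRels G)))
      (Coprod.inr : G →* Coprod G G).range := MonoidHom.range_comp _ _
  rw [h1, h2]
  erw [← Subgroup.map_sup, Coprod.range_inl_sup_range_inr]
  exact Subgroup.map_top_of_surjective _ (QuotientGroup.mk'_surjective _)

end Proj

/-- Υ(G) = [G,Gφ] is normal in ν(G) and ν(G) = ([G,Gφ] ⋊ G) ⋊ Gφ (internal
iterated semidirect product). -/
theorem nu_decomposition (G : Type*) [Group G] :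
    (⁅(nuL G).range, (nuR G).range⁆ : Subgroup (Nu G)).Normal ∧
    ⁅(nuL G).range, (nuR G).range⁆ ⊓ (nuL G).range = ⊥ ∧
    (⁅(nuL G).range, (nuR G).range⁆ ⊔ (nuL G).range : Subgroup (Nu G)).Normal ∧
    (⁅(nuL G).range, (nuR G).range⁆ ⊔ (nuL G).range) ⊓ (nuR G).range = ⊥ ∧
    (⁅(nuL G).range, (nuR G).range⁆ ⊔ (nuL G).range) ⊔ (nuR G).range = ⊤ := by
  set A := (nuL G).range
  set B := (nuR G).range
  have hsup : A ⊔ B = ⊤ := nu_sup_eq_top G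
  have hKL : ⁅A, B⁆ ≤ (nuProjL G).ker := by
    rw [Subgroup.commutator_le]
    rintro _ ⟨x, rfl⟩ _ ⟨y, rfl⟩
    simp [MonoidHom.mem_ker, commutatorElement_def]
  have hKR : ⁅A, B⁆ ≤ (nuProjR G).ker := by
    rw [Subgroup.commutator_le]
    rintro _ ⟨x, rfl⟩ _ ⟨y, rfl⟩
    simp [MonoidHom.mem_ker, commutatorElement_def]
  refine ⟨commutator_normal_of_sup hsup, ?_, sup_normal_of_sup hsup, ?_, ?_⟩
  · rw [eq_bot_iff]
    rintro x ⟨hxK, g, rfl⟩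
    have : g = 1 := by simpa using hKL hxK
    simp [this]
  · rw [eq_bot_iff]
    rintro x ⟨hxK, h, rfl⟩
    have hA : A ≤ (nuProjR G).ker := by rintro _ ⟨g, rfl⟩; simp [MonoidHom.mem_ker]
    have : h = 1 := by simpa using (sup_le hKR hA) hxK
    simp [this]
  · rw [sup_assoc, eq_top_iff, ← hsup]
    exact le_sup_right
end

section
/- The map [g,hφ] ↦ [g,h] extends to a well-defined group homomorphism ρ' from Υ(G) = [G,Gφ] ≤ ν(G) onto the derived subgroup G', and Υ(G)/ker(ρ') is isomorphic to G'. -/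
open Monoid Subgroup
open scoped commutatorElement

noncomputable section

variable {G : Type*} [Group G]

/-- The big map ν(G) → G sending both copies identically. -/
def nuRho (G : Type*) [Group G] : Nu G →* G :=
  QuotientGroup.lift _ (Coprod.lift (MonoidHom.id G) (MonoidHom.id G)) (by
    have hsub : nuRels G ⊆ ((Coprod.lift (MonoidHom.id G) (MonoidHom.id G)).ker : Subgroup _) := by
      rintro r ⟨g, h, k, (rfl | rfl)⟩ <;>
        simp [MonoidHom.mem_ker, commutatorElement_def, mul_assoc]
    intro x hx
    exact Subgroup.normalClosure_le_normal hsub hx)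

@[simp] lemma nuRho_nuL (g : G) : nuRho G (nuL G g) = g := by
  rfl

@[simp] lemma nuRho_nuR (g : G) : nuRho G (nuR G g) = g := by
  rfl

end

/-- The derived map ρ' : Υ(G) → G', [g,hφ] ↦ [g,h], is a well-defined
homomorphism onto G', and Υ(G)/ker ρ' ≅ G'. -/

theorem nu_derived_map (G : Type*) [Group G] :
    ∃ ρ : (⁅(nuL G).range, (nuR G).range⁆ : Subgroup (Nu G)) →* G,
      (∀ (g h : G) (hm : ⁅nuL G g, nuR G h⁆ ∈ ⁅(nuL G).range, (nuR G).range⁆),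
        ρ ⟨⁅nuL G g, nuR G h⁆, hm⟩ = ⁅g, h⁆) ∧
      ρ.range = commutator G ∧
      Nonempty
        (((⁅(nuL G).range, (nuR G).range⁆ : Subgroup (Nu G)) ⧸ ρ.ker) ≃* commutator G) := by
  set Υ : Subgroup (Nu G) := ⁅(nuL G).range, (nuR G).range⁆ with hΥ
  refine ⟨(nuRho G).comp Υ.subtype, ?_, ?_, ?_⟩
  · intro g h hm
    simp [commutatorElement_def]
  · have hrange : ((nuRho G).comp Υ.subtype).range = Υ.map (nuRho G) := by
      rw [MonoidHom.range_comp, Subgroup.range_subtype]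
    rw [hrange, hΥ, Subgroup.map_commutator]
    have h1 : ((nuL G).range).map (nuRho G) = ⊤ := by
      rw [← MonoidHom.range_comp]
      refine top_unique ?_
      intro x _
      exact ⟨x, by simp⟩
    have h2 : ((nuR G).range).map (nuRho G) = ⊤ := by
      rw [← MonoidHom.range_comp]
      refine top_unique ?_
      intro x _
      exact ⟨x, by simp⟩
    rw [h1, h2, _root_.commutator_def]
  · refine ⟨(QuotientGroup.quotientKerEquivRange _).trans (MulEquiv.subgroupCongr ?_)⟩
    have hrange : ((nuRho G).comp Υ.subtype).range = Υ.map (nuRho G) := by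
      rw [MonoidHom.range_comp, Subgroup.range_subtype]
    rw [hrange, hΥ, Subgroup.map_commutator]
    have h1 : ((nuL G).range).map (nuRho G) = ⊤ := by
      rw [← MonoidHom.range_comp]
      refine top_unique ?_
      intro x _
      exact ⟨x, by simp⟩
    have h2 : ((nuR G).range).map (nuRho G) = ⊤ := by
      rw [← MonoidHom.range_comp]
      refine top_unique ?_
      intro x _
      exact ⟨x, by simp⟩
    rw [h1, h2, _root_.commutator_def]
end

section
/- For every positive integer n, the subgroup [Z_n(G), Gφ][G, Z_n(G)φ] of ν(G) is contained in the n-th center Z_n(ν(G)). -/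
open Monoid Subgroup
open scoped commutatorElement

namespace NuAux

variable {G : Type*} [Group G]

lemma conj_fix_comm {Q : Type*} [Group Q] {a x : Q} (h : a⁻¹ * x * a = x) : x * a = a * x := by
  calc x * a = a * (a⁻¹ * x * a) := by group
    _ = a * x := by rw [h]

lemma conj_fix_fwd {Q : Type*} [Group Q] {a x : Q} (h : a⁻¹ * x * a = x) : a * x * a⁻¹ = x := by
  have h2 := conj_fix_comm h
  rw [← h2]
  exact mul_inv_cancel_right x a

lemma relL (g h k : G) :
    (nuL G k)⁻¹ * ⁅nuL G g, nuR G h⁆ * nuL G k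
      = ⁅nuL G (k⁻¹ * g * k), nuR G (k⁻¹ * h * k)⁆ := by
  have hmem : (((Coprod.inl k)⁻¹ * ⁅(Coprod.inl g : Coprod G G), Coprod.inr h⁆ * Coprod.inl k) *
      (⁅(Coprod.inl (k⁻¹ * g * k) : Coprod G G), Coprod.inr (k⁻¹ * h * k)⁆)⁻¹) ∈
      Subgroup.normalClosure (nuRels G) :=
    Subgroup.subset_normalClosure ⟨g, h, k, Or.inl rfl⟩
  have h1 : (QuotientGroup.mk' (Subgroup.normalClosure (nuRels G)))
      (((Coprod.inl k)⁻¹ * ⁅(Coprod.inl g : Coprod G G), Coprod.inr h⁆ * Coprod.inl k) *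
      (⁅(Coprod.inl (k⁻¹ * g * k) : Coprod G G), Coprod.inr (k⁻¹ * h * k)⁆)⁻¹) = 1 :=
    (QuotientGroup.eq_one_iff _).mpr hmem
  have eL : ∀ a : G, (QuotientGroup.mk' (Subgroup.normalClosure (nuRels G))) (Coprod.inl a) = nuL G a :=
    fun _ => rfl
  have eR : ∀ a : G, (QuotientGroup.mk' (Subgroup.normalClosure (nuRels G))) (Coprod.inr a) = nuR G a :=
    fun _ => rfl
  simp only [map_mul, map_inv, map_commutatorElement, eL, eR] at h1
  have e1 : nuL G (k⁻¹ * g * k) = (nuL G k)⁻¹ * nuL G g * nuL G k := by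
    simp only [map_mul, map_inv]
  have e2 : nuR G (k⁻¹ * h * k) = (nuR G k)⁻¹ * nuR G h * nuR G k := by
    simp only [map_mul, map_inv]
  rw [e1, e2]
  exact mul_inv_eq_one.mp h1

lemma relR (g h k : G) :
    (nuR G k)⁻¹ * ⁅nuL G g, nuR G h⁆ * nuR G k
      = ⁅nuL G (k⁻¹ * g * k), nuR G (k⁻¹ * h * k)⁆ := by
  have hmem : (((Coprod.inr k)⁻¹ * ⁅(Coprod.inl g : Coprod G G), Coprod.inr h⁆ * Coprod.inr k) *
      (⁅(Coprod.inl (k⁻¹ * g * k) : Coprod G G), Coprod.inr (k⁻¹ * h * k)⁆)⁻¹) ∈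
      Subgroup.normalClosure (nuRels G) :=
    Subgroup.subset_normalClosure ⟨g, h, k, Or.inr rfl⟩
  have h1 : (QuotientGroup.mk' (Subgroup.normalClosure (nuRels G)))
      (((Coprod.inr k)⁻¹ * ⁅(Coprod.inl g : Coprod G G), Coprod.inr h⁆ * Coprod.inr k) *
      (⁅(Coprod.inl (k⁻¹ * g * k) : Coprod G G), Coprod.inr (k⁻¹ * h * k)⁆)⁻¹) = 1 :=
    (QuotientGroup.eq_one_iff _).mpr hmem
  have eL : ∀ a : G, (QuotientGroup.mk' (Subgroup.normalClosure (nuRels G))) (Coprod.inl a) = nuL G a :=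
    fun _ => rfl
  have eR : ∀ a : G, (QuotientGroup.mk' (Subgroup.normalClosure (nuRels G))) (Coprod.inr a) = nuR G a :=
    fun _ => rfl
  simp only [map_mul, map_inv, map_commutatorElement, eL, eR] at h1
  have e1 : nuL G (k⁻¹ * g * k) = (nuL G k)⁻¹ * nuL G g * nuL G k := by
    simp only [map_mul, map_inv]
  have e2 : nuR G (k⁻¹ * h * k) = (nuR G k)⁻¹ * nuR G h * nuR G k := by
    simp only [map_mul, map_inv]
  rw [e1, e2]
  exact mul_inv_eq_one.mp h1

lemma relL' (g h k : G) :
    (nuL G k)⁻¹ * ⁅nuL G g, nuR G h⁆ * nuL G k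
      = ⁅(nuL G k)⁻¹ * nuL G g * nuL G k, (nuR G k)⁻¹ * nuR G h * nuR G k⁆ := by
  have h1 := relL (G := G) g h k
  simp only [map_mul, map_inv] at h1
  exact h1

lemma relR' (g h k : G) :
    (nuR G k)⁻¹ * ⁅nuL G g, nuR G h⁆ * nuR G k
      = ⁅(nuL G k)⁻¹ * nuL G g * nuL G k, (nuR G k)⁻¹ * nuR G h * nuR G k⁆ := by
  have h1 := relR (G := G) g h k
  simp only [map_mul, map_inv] at h1
  exact h1

/-- ν(G) is generated by the images of the two canonical maps. -/
lemma mem_of_L_R (s : Subgroup (Nu G)) (hL : ∀ g, nuL G g ∈ s) (hR : ∀ g, nuR G g ∈ s)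
    (x : Nu G) : x ∈ s := by
  obtain ⟨y, rfl⟩ := QuotientGroup.mk'_surjective (Subgroup.normalClosure (nuRels G)) x
  induction y using Coprod.induction_on with
  | inl g => exact hL g
  | inr g => exact hR g
  | mul a b ha hb => rw [map_mul]; exact s.mul_mem ha hb

/-- Surjective homomorphisms map the upper central series into the upper central series. -/
lemma map_upperCentral {A B : Type*} [Group A] [Group B] (f : A →* B)
    (hf : Function.Surjective f) : ∀ n : ℕ, ∀ x ∈ Subgroup.upperCentralSeries A n, f x ∈ Subgroup.upperCentralSeries B n
  | 0, x, hx => by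
      rw [Subgroup.upperCentralSeries_zero, Subgroup.mem_bot] at hx
      rw [Subgroup.upperCentralSeries_zero, Subgroup.mem_bot, hx, map_one]
  | (n+1), x, hx => by
      rw [Subgroup.mem_upperCentralSeries_succ_iff] at hx ⊢
      intro y
      obtain ⟨y', rfl⟩ := hf y
      have h2 := map_upperCentral f hf n _ (hx y')
      simpa only [map_commutatorElement] using h2

/-- The swap of the two copies, as an endomorphism of ν(G). -/
def nuSwap : Nu G →* Nu G :=
  QuotientGroup.lift _ (Coprod.lift (nuR G) (nuL G)) (by
    intro x hx
    refine Subgroup.normalClosure_le_normal ?_ hx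
    rintro r ⟨g, h, k, hr | hr⟩ <;> subst hr <;>
      simp only [SetLike.mem_coe, MonoidHom.mem_ker, map_mul, map_inv, map_commutatorElement,
        Coprod.lift_apply_inl, Coprod.lift_apply_inr]
    · rw [show ⁅nuR G g, nuL G h⁆ = ⁅nuL G h, nuR G g⁆⁻¹ from (commutatorElement_inv _ _).symm,
        show ⁅(nuR G k)⁻¹ * nuR G g * nuR G k, (nuL G k)⁻¹ * nuL G h * nuL G k⁆ =
          ⁅(nuL G k)⁻¹ * nuL G h * nuL G k, (nuR G k)⁻¹ * nuR G g * nuR G k⁆⁻¹ from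
          (commutatorElement_inv _ _).symm,
        ← relR' h g k]
      group
    · rw [show ⁅nuR G g, nuL G h⁆ = ⁅nuL G h, nuR G g⁆⁻¹ from (commutatorElement_inv _ _).symm,
        show ⁅(nuR G k)⁻¹ * nuR G g * nuR G k, (nuL G k)⁻¹ * nuL G h * nuL G k⁆ =
          ⁅(nuL G k)⁻¹ * nuL G h * nuL G k, (nuR G k)⁻¹ * nuR G g * nuR G k⁆⁻¹ from
          (commutatorElement_inv _ _).symm,
        ← relL' h g k]
      group)

@[simp] lemma nuSwap_L (g : G) : nuSwap (nuL G g) = nuR G g := rfl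

@[simp] lemma nuSwap_R (g : G) : nuSwap (nuR G g) = nuL G g := rfl

lemma nuSwap_surj : Function.Surjective (nuSwap (G := G)) := by
  intro x
  have hx : x ∈ (nuSwap (G := G)).range := by
    refine mem_of_L_R _ (fun g => ?_) (fun g => ?_) x
    · exact MonoidHom.mem_range.mpr ⟨nuR G g, nuSwap_R g⟩
    · exact MonoidHom.mem_range.mpr ⟨nuL G g, nuSwap_L g⟩
  exact MonoidHom.mem_range.mp hx

lemma conj_fwd_comm {Q : Type*} [Group Q] {a x : Q} (h : a * x * a⁻¹ = x) : a * x = x * a := by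
  calc a * x = (a * x * a⁻¹) * a := by group
    _ = x * a := by rw [h]

lemma comm_mem_iff {A : Type*} [Group A] (N : Subgroup A) [N.Normal] (x y : A) :
    x * y * x⁻¹ * y⁻¹ ∈ N ↔
      (QuotientGroup.mk' N) x * (QuotientGroup.mk' N) y
        = (QuotientGroup.mk' N) y * (QuotientGroup.mk' N) x := by
  have h0 : (QuotientGroup.mk' N) (x * y * x⁻¹ * y⁻¹) = 1 ↔ x * y * x⁻¹ * y⁻¹ ∈ N :=
    QuotientGroup.eq_one_iff _
  rw [← h0]
  simp only [map_mul, map_inv]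
  constructor
  · intro h
    exact mul_inv_eq_iff_eq_mul.mp (mul_inv_eq_one.mp h)
  · intro h
    rw [h]
    group

lemma mem_succ_of_gen (m : ℕ) (x : Nu G)
    (hL : ∀ h : G, x * nuL G h * x⁻¹ * (nuL G h)⁻¹ ∈ Subgroup.upperCentralSeries (Nu G) m)
    (hR : ∀ h : G, x * nuR G h * x⁻¹ * (nuR G h)⁻¹ ∈ Subgroup.upperCentralSeries (Nu G) m) :
    x ∈ Subgroup.upperCentralSeries (Nu G) (m + 1) := by
  rw [Subgroup.mem_upperCentralSeries_succ_iff]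
  intro y
  rw [commutatorElement_def, comm_mem_iff]
  have hy : y ∈ Subgroup.comap (QuotientGroup.mk' (Subgroup.upperCentralSeries (Nu G) m))
      (Subgroup.centralizer {(QuotientGroup.mk' (Subgroup.upperCentralSeries (Nu G) m)) x}) := by
    refine mem_of_L_R _ (fun g => ?_) (fun g => ?_) y
    · refine Subgroup.mem_comap.mpr (Subgroup.mem_centralizer_iff.mpr ?_)
      intro w hw
      rw [Set.mem_singleton_iff] at hw
      subst hw
      exact (comm_mem_iff _ _ _).mp (hL g)
    · refine Subgroup.mem_comap.mpr (Subgroup.mem_centralizer_iff.mpr ?_)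
      intro w hw
      rw [Set.mem_singleton_iff] at hw
      subst hw
      exact (comm_mem_iff _ _ _).mp (hR g)
  exact Subgroup.mem_centralizer_iff.mp (Subgroup.mem_comap.mp hy) _ (Set.mem_singleton _)

lemma step_main (n : ℕ)
    (IHa : ∀ c ∈ Subgroup.upperCentralSeries G n, ∀ g : G,
      ⁅nuL G c, nuR G g⁆ ∈ Subgroup.upperCentralSeries (Nu G) n)
    (IHb : ∀ c ∈ Subgroup.upperCentralSeries G n, ∀ g : G,
      ⁅nuL G g, nuR G c⁆ ∈ Subgroup.upperCentralSeries (Nu G) n)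
    (IHc : ∀ c ∈ Subgroup.upperCentralSeries G n, nuL G c ∈ Subgroup.upperCentralSeries (Nu G) (n + 1))
    {z : G} (hz : z ∈ Subgroup.upperCentralSeries G (n + 1)) (g : G) :
    ⁅nuL G z, nuR G g⁆ ∈ Subgroup.upperCentralSeries (Nu G) (n + 1) := by
  have hsurj : Function.Surjective (QuotientGroup.mk' (Subgroup.upperCentralSeries (Nu G) n)) :=
    QuotientGroup.mk'_surjective _
  set π := QuotientGroup.mk' (Subgroup.upperCentralSeries (Nu G) n) with hπdef
  have hone : ∀ w : Nu G, w ∈ Subgroup.upperCentralSeries (Nu G) n → π w = 1 := fun w hw =>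
    (QuotientGroup.eq_one_iff w).mpr hw
  have hnor : (Subgroup.upperCentralSeries G n).Normal := inferInstance
  -- central elements of the quotient
  have hcentL : ∀ c ∈ Subgroup.upperCentralSeries G n, ∀ q, π (nuL G c) * q = q * π (nuL G c) := by
    intro c hc q
    obtain ⟨y, rfl⟩ := hsurj q
    exact (comm_mem_iff _ _ _).mp (Subgroup.mem_upperCentralSeries_succ_iff.mp (IHc c hc) y)
  -- reduction lemmas
  have red1 : ∀ c ∈ Subgroup.upperCentralSeries G n, ∀ v w : G,
      π ⁅nuL G (c * v), nuR G w⁆ = π ⁅nuL G v, nuR G w⁆ := by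
    intro c hc v w
    have hsplit : ⁅nuL G (c * v), nuR G w⁆
        = nuL G c * ⁅nuL G v, nuR G w⁆ * (nuL G c)⁻¹ * ⁅nuL G c, nuR G w⁆ := by
      rw [map_mul, commutatorElement_def, commutatorElement_def, commutatorElement_def]
      group
    rw [hsplit]
    simp only [map_mul, map_inv]
    rw [hone _ (IHa c hc w), mul_one, hcentL c hc]
    exact mul_inv_cancel_right _ _
  have red2 : ∀ e ∈ Subgroup.upperCentralSeries G n, ∀ v w : G,
      π ⁅nuL G v, nuR G (w * e)⁆ = π ⁅nuL G v, nuR G w⁆ := by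
    intro e he v w
    have hsplit : ⁅nuL G v, nuR G (w * e)⁆
        = ⁅nuL G v, nuR G w⁆ * (nuR G w * ⁅nuL G v, nuR G e⁆ * (nuR G w)⁻¹) := by
      rw [map_mul, commutatorElement_def, commutatorElement_def, commutatorElement_def]
      group
    rw [hsplit]
    simp only [map_mul, map_inv]
    rw [hone _ (IHb e he v), mul_one, mul_inv_cancel, mul_one]
  -- facts about z
  have hz1 : ∀ y : G, z * y * z⁻¹ * y⁻¹ ∈ Subgroup.upperCentralSeries G n :=
    Subgroup.mem_upperCentralSeries_succ_iff.mp hz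
  have hzmem : ∀ k : G, k⁻¹ * z * k * z⁻¹ ∈ Subgroup.upperCentralSeries G n := by
    intro k
    have h1 := hnor.conj_mem _ (hz1 k) k⁻¹
    have h2 : k⁻¹ * (z * k * z⁻¹ * k⁻¹) * k⁻¹⁻¹ = k⁻¹ * z * k * z⁻¹ := by group
    rwa [h2] at h1
  have hzc : ∀ k : G, k * z * k⁻¹ * z⁻¹ ∈ Subgroup.upperCentralSeries G n := by
    intro k
    have h1 := hnor.conj_mem _ (hz1 k⁻¹) k
    have h2 : k * (z * k⁻¹ * z⁻¹ * k⁻¹⁻¹) * k⁻¹ = k * z * k⁻¹ * z⁻¹ := by group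
    rwa [h2] at h1
  have redzB : ∀ k w : G, π ⁅nuL G (k⁻¹ * z * k), nuR G w⁆ = π ⁅nuL G z, nuR G w⁆ := by
    intro k w
    rw [show k⁻¹ * z * k = (k⁻¹ * z * k * z⁻¹) * z from by group]
    exact red1 _ (hzmem k) z w
  have redzF : ∀ k w : G, π ⁅nuL G (k * z * k⁻¹), nuR G w⁆ = π ⁅nuL G z, nuR G w⁆ := by
    intro k w
    rw [show k * z * k⁻¹ = (k * z * k⁻¹ * z⁻¹) * z from by group]
    exact red1 _ (hzc k) z w
  -- conjugation formulas
  have eRb : ∀ k u : G, (π (nuR G k))⁻¹ * π ⁅nuL G z, nuR G u⁆ * π (nuR G k)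
      = π ⁅nuL G z, nuR G (k⁻¹ * u * k)⁆ := by
    intro k u
    calc (π (nuR G k))⁻¹ * π ⁅nuL G z, nuR G u⁆ * π (nuR G k)
        = π ((nuR G k)⁻¹ * ⁅nuL G z, nuR G u⁆ * nuR G k) := by simp only [map_mul, map_inv]
      _ = π ⁅nuL G (k⁻¹ * z * k), nuR G (k⁻¹ * u * k)⁆ := by rw [relR]
      _ = π ⁅nuL G z, nuR G (k⁻¹ * u * k)⁆ := redzB k _
  have eRf : ∀ k u : G, π (nuR G k) * π ⁅nuL G z, nuR G u⁆ * (π (nuR G k))⁻¹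
      = π ⁅nuL G z, nuR G (k * u * k⁻¹)⁆ := by
    intro k u
    have h1 := relR (G := G) z u k⁻¹
    simp only [inv_inv] at h1
    calc π (nuR G k) * π ⁅nuL G z, nuR G u⁆ * (π (nuR G k))⁻¹
        = π ((nuR G k⁻¹)⁻¹ * ⁅nuL G z, nuR G u⁆ * nuR G k⁻¹) := by
          simp only [map_mul, map_inv, inv_inv]
      _ = π ⁅nuL G (k * z * k⁻¹), nuR G (k * u * k⁻¹)⁆ := by rw [h1]
      _ = π ⁅nuL G z, nuR G (k * u * k⁻¹)⁆ := redzF k _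
  have ezLb : ∀ u : G, (π (nuL G z))⁻¹ * π ⁅nuL G z, nuR G u⁆ * π (nuL G z)
      = π ⁅nuL G z, nuR G u⁆ := by
    intro u
    have m1 : u⁻¹ * z⁻¹ * u * z ∈ Subgroup.upperCentralSeries G n := by
      have h3 := hnor.conj_mem _ (inv_mem (hzmem u)) z⁻¹
      have e : z⁻¹ * (u⁻¹ * z * u * z⁻¹)⁻¹ * z⁻¹⁻¹ = u⁻¹ * z⁻¹ * u * z := by group
      rwa [e] at h3
    calc (π (nuL G z))⁻¹ * π ⁅nuL G z, nuR G u⁆ * π (nuL G z)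
        = π ((nuL G z)⁻¹ * ⁅nuL G z, nuR G u⁆ * nuL G z) := by simp only [map_mul, map_inv]
      _ = π ⁅nuL G (z⁻¹ * z * z), nuR G (z⁻¹ * u * z)⁆ := by rw [relL]
      _ = π ⁅nuL G z, nuR G (u * (u⁻¹ * z⁻¹ * u * z))⁆ := by
          rw [show z⁻¹ * z * z = z from by group,
            show z⁻¹ * u * z = u * (u⁻¹ * z⁻¹ * u * z) from by group]
      _ = π ⁅nuL G z, nuR G u⁆ := red2 _ m1 z u
  have ezLf : ∀ u : G, π (nuL G z) * π ⁅nuL G z, nuR G u⁆ * (π (nuL G z))⁻¹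
      = π ⁅nuL G z, nuR G u⁆ := fun u => conj_fix_fwd (ezLb u)
  -- the multiplication rule
  have HF : ∀ a b : G, π ⁅nuL G z, nuR G (a * b)⁆
      = π ⁅nuL G z, nuR G a⁆ * π ⁅nuL G z, nuR G (a * b * a⁻¹)⁆ := by
    intro a b
    have hsplit : ⁅nuL G z, nuR G a * nuR G b⁆
        = ⁅nuL G z, nuR G a⁆ * (nuR G a * ⁅nuL G z, nuR G b⁆ * (nuR G a)⁻¹) := by
      rw [commutatorElement_def, commutatorElement_def, commutatorElement_def]
      group
    calc π ⁅nuL G z, nuR G (a * b)⁆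
        = π (⁅nuL G z, nuR G a⁆ * (nuR G a * ⁅nuL G z, nuR G b⁆ * (nuR G a)⁻¹)) := by
          rw [map_mul, hsplit]
      _ = π ⁅nuL G z, nuR G a⁆ * (π (nuR G a) * π ⁅nuL G z, nuR G b⁆ * (π (nuR G a))⁻¹) := by
          simp only [map_mul, map_inv]
      _ = π ⁅nuL G z, nuR G a⁆ * π ⁅nuL G z, nuR G (a * b * a⁻¹)⁆ := by rw [eRf a b]
  have HF2 : ∀ a b : G, π ⁅nuL G z, nuR G (b * a)⁆
      = π ⁅nuL G z, nuR G a⁆ * π ⁅nuL G z, nuR G b⁆ := by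
    intro a b
    have h1 := HF a (a⁻¹ * b * a)
    rw [show a * (a⁻¹ * b * a) = b * a from by group,
      show b * a * a⁻¹ = b from by group] at h1
    exact h1
  have HFone : π ⁅nuL G z, nuR G 1⁆ = 1 := by
    rw [map_one, commutatorElement_one_right, map_one]
  have HFinv : ∀ u : G, π ⁅nuL G z, nuR G u⁻¹⁆ = (π ⁅nuL G z, nuR G u⁆)⁻¹ := by
    intro u
    have h1 := HF2 u u⁻¹
    rw [inv_mul_cancel, HFone] at h1
    exact (inv_eq_of_mul_eq_one_right h1.symm).symm
  -- commutation of the values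
  have Hcomm : ∀ a b : G,
      π ⁅nuL G z, nuR G b⁆ * π ⁅nuL G z, nuR G a⁆ * (π ⁅nuL G z, nuR G b⁆)⁻¹
        = π ⁅nuL G z, nuR G a⁆ := by
    intro a b
    have hFb : π ⁅nuL G z, nuR G b⁆
        = π (nuL G z) * π (nuR G b) * (π (nuL G z))⁻¹ * (π (nuR G b))⁻¹ := by
      rw [commutatorElement_def]
      simp only [map_mul, map_inv]
    calc π ⁅nuL G z, nuR G b⁆ * π ⁅nuL G z, nuR G a⁆ * (π ⁅nuL G z, nuR G b⁆)⁻¹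
        = π (nuL G z) * (π (nuR G b) * ((π (nuL G z))⁻¹ *
            ((π (nuR G b))⁻¹ * π ⁅nuL G z, nuR G a⁆ * π (nuR G b)) * π (nuL G z)) *
            (π (nuR G b))⁻¹) * (π (nuL G z))⁻¹ := by
          rw [hFb]; group
      _ = π (nuL G z) * (π (nuR G b) * ((π (nuL G z))⁻¹ *
            π ⁅nuL G z, nuR G (b⁻¹ * a * b)⁆ * π (nuL G z)) *
            (π (nuR G b))⁻¹) * (π (nuL G z))⁻¹ := by rw [eRb b a]
      _ = π (nuL G z) * (π (nuR G b) * π ⁅nuL G z, nuR G (b⁻¹ * a * b)⁆ *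
            (π (nuR G b))⁻¹) * (π (nuL G z))⁻¹ := by rw [ezLb]
      _ = π (nuL G z) * π ⁅nuL G z, nuR G (b * (b⁻¹ * a * b) * b⁻¹)⁆ * (π (nuL G z))⁻¹ := by
          rw [eRf b]
      _ = π (nuL G z) * π ⁅nuL G z, nuR G a⁆ * (π (nuL G z))⁻¹ := by
          rw [show b * (b⁻¹ * a * b) * b⁻¹ = a from by group]
      _ = π ⁅nuL G z, nuR G a⁆ := ezLf a
  -- conjugation of the main commutator by nuR h
  have hRconj : ∀ h : G, π (nuR G h * ⁅nuL G z, nuR G g⁆ * (nuR G h)⁻¹)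
      = π ⁅nuL G z, nuR G (h * g * h⁻¹)⁆ := by
    intro h
    have h1 := relR (G := G) z g h⁻¹
    simp only [map_inv, inv_inv] at h1
    rw [h1]
    exact redzF h _
  have hinv : ∀ h : G, π ⁅nuL G z, nuR G (h * g * h⁻¹)⁆ = π ⁅nuL G z, nuR G g⁆ := by
    intro h
    have hcm : π ⁅nuL G z, nuR G h⁆ * π ⁅nuL G z, nuR G g⁆
        = π ⁅nuL G z, nuR G g⁆ * π ⁅nuL G z, nuR G h⁆ := conj_fwd_comm (Hcomm g h)
    calc π ⁅nuL G z, nuR G (h * g * h⁻¹)⁆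
        = π ⁅nuL G z, nuR G (h * (g * h⁻¹))⁆ := by rw [mul_assoc]
      _ = π ⁅nuL G z, nuR G (g * h⁻¹)⁆ * π ⁅nuL G z, nuR G h⁆ := HF2 (g * h⁻¹) h
      _ = π ⁅nuL G z, nuR G h⁻¹⁆ * π ⁅nuL G z, nuR G g⁆ * π ⁅nuL G z, nuR G h⁆ := by
          rw [HF2 h⁻¹ g]
      _ = (π ⁅nuL G z, nuR G h⁆)⁻¹ * π ⁅nuL G z, nuR G g⁆ * π ⁅nuL G z, nuR G h⁆ := by
          rw [HFinv h]
      _ = (π ⁅nuL G z, nuR G h⁆)⁻¹ * (π ⁅nuL G z, nuR G g⁆ * π ⁅nuL G z, nuR G h⁆) := by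
          rw [mul_assoc]
      _ = (π ⁅nuL G z, nuR G h⁆)⁻¹ * (π ⁅nuL G z, nuR G h⁆ * π ⁅nuL G z, nuR G g⁆) := by
          rw [hcm]
      _ = π ⁅nuL G z, nuR G g⁆ := by rw [inv_mul_cancel_left]
  -- membership of the R-commutators
  have hRmem : ∀ h : G, ⁅nuL G z, nuR G g⁆ * nuR G h * ⁅nuL G z, nuR G g⁆⁻¹ * (nuR G h)⁻¹
      ∈ Subgroup.upperCentralSeries (Nu G) n := by
    intro h
    have h8 : π (⁅nuL G z, nuR G g⁆ * (nuR G h * ⁅nuL G z, nuR G g⁆ * (nuR G h)⁻¹)⁻¹) = 1 := by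
      rw [map_mul, map_inv, hRconj h, hinv h, mul_inv_cancel]
    have h9 := (QuotientGroup.eq_one_iff _).mp h8
    have e0 : ⁅nuL G z, nuR G g⁆ * nuR G h * ⁅nuL G z, nuR G g⁆⁻¹ * (nuR G h)⁻¹
        = ⁅nuL G z, nuR G g⁆ * (nuR G h * ⁅nuL G z, nuR G g⁆ * (nuR G h)⁻¹)⁻¹ := by group
    rwa [← e0] at h9
  -- conjugation by nuL h agrees with conjugation by nuR h
  have hLmem : ∀ h : G, ⁅nuL G z, nuR G g⁆ * nuL G h * ⁅nuL G z, nuR G g⁆⁻¹ * (nuL G h)⁻¹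
      ∈ Subgroup.upperCentralSeries (Nu G) n := by
    intro h
    have hA := relL (G := G) z g h⁻¹
    have hB := relR (G := G) z g h⁻¹
    simp only [map_inv, inv_inv] at hA hB
    have hcL : nuL G h * ⁅nuL G z, nuR G g⁆ * (nuL G h)⁻¹
        = nuR G h * ⁅nuL G z, nuR G g⁆ * (nuR G h)⁻¹ := by rw [hA, ← hB]
    have e : ⁅nuL G z, nuR G g⁆ * nuL G h * ⁅nuL G z, nuR G g⁆⁻¹ * (nuL G h)⁻¹
        = ⁅nuL G z, nuR G g⁆ * nuR G h * ⁅nuL G z, nuR G g⁆⁻¹ * (nuR G h)⁻¹ := by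
      have e1 : ⁅nuL G z, nuR G g⁆ * nuL G h * ⁅nuL G z, nuR G g⁆⁻¹ * (nuL G h)⁻¹
          = ⁅nuL G z, nuR G g⁆ * (nuL G h * ⁅nuL G z, nuR G g⁆ * (nuL G h)⁻¹)⁻¹ := by group
      have e2 : ⁅nuL G z, nuR G g⁆ * nuR G h * ⁅nuL G z, nuR G g⁆⁻¹ * (nuR G h)⁻¹
          = ⁅nuL G z, nuR G g⁆ * (nuR G h * ⁅nuL G z, nuR G g⁆ * (nuR G h)⁻¹)⁻¹ := by group
      rw [e1, e2, hcL]
    rw [e]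
    exact hRmem h
  exact mem_succ_of_gen n _ hLmem hRmem

theorem nu_key (n : ℕ) :
    (∀ z ∈ Subgroup.upperCentralSeries G n, ∀ g : G,
        ⁅nuL G z, nuR G g⁆ ∈ Subgroup.upperCentralSeries (Nu G) n ∧
        ⁅nuL G g, nuR G z⁆ ∈ Subgroup.upperCentralSeries (Nu G) n) ∧
    (∀ z ∈ Subgroup.upperCentralSeries G n,
        nuL G z ∈ Subgroup.upperCentralSeries (Nu G) (n + 1) ∧
        nuR G z ∈ Subgroup.upperCentralSeries (Nu G) (n + 1)) := by
  induction n with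
  | zero =>
      constructor
      · intro z hz g
        rw [Subgroup.upperCentralSeries_zero, Subgroup.mem_bot] at hz
        subst hz
        simp only [map_one, commutatorElement_one_left, commutatorElement_one_right]
        exact ⟨one_mem _, one_mem _⟩
      · intro z hz
        rw [Subgroup.upperCentralSeries_zero, Subgroup.mem_bot] at hz
        subst hz
        simp only [map_one]
        exact ⟨one_mem _, one_mem _⟩
  | succ n IH =>
      have IHa : ∀ c ∈ Subgroup.upperCentralSeries G n, ∀ g : G,
          ⁅nuL G c, nuR G g⁆ ∈ Subgroup.upperCentralSeries (Nu G) n := fun c hc g => (IH.1 c hc g).1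
      have IHb : ∀ c ∈ Subgroup.upperCentralSeries G n, ∀ g : G,
          ⁅nuL G g, nuR G c⁆ ∈ Subgroup.upperCentralSeries (Nu G) n := fun c hc g => (IH.1 c hc g).2
      have IHc : ∀ c ∈ Subgroup.upperCentralSeries G n,
          nuL G c ∈ Subgroup.upperCentralSeries (Nu G) (n + 1) := fun c hc => (IH.2 c hc).1
      have hA : ∀ z ∈ Subgroup.upperCentralSeries G (n + 1), ∀ g : G,
          ⁅nuL G z, nuR G g⁆ ∈ Subgroup.upperCentralSeries (Nu G) (n + 1) := fun z hz g =>
        step_main n IHa IHb IHc hz g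
      have hB : ∀ z ∈ Subgroup.upperCentralSeries G (n + 1), ∀ g : G,
          ⁅nuL G g, nuR G z⁆ ∈ Subgroup.upperCentralSeries (Nu G) (n + 1) := by
        intro z hz g
        have h2 := map_upperCentral nuSwap nuSwap_surj (n + 1) _ (hA z hz g)
        rw [map_commutatorElement, nuSwap_L, nuSwap_R] at h2
        rw [show ⁅nuL G g, nuR G z⁆ = ⁅nuR G z, nuL G g⁆⁻¹ from (commutatorElement_inv _ _).symm]
        exact inv_mem h2
      refine ⟨fun z hz g => ⟨hA z hz g, hB z hz g⟩, fun z hz => ?_⟩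
      have hLm : nuL G z ∈ Subgroup.upperCentralSeries (Nu G) (n + 1 + 1) := by
        refine mem_succ_of_gen (n + 1) _ (fun h => ?_) (fun h => ?_)
        · have e : nuL G z * nuL G h * (nuL G z)⁻¹ * (nuL G h)⁻¹
              = nuL G (z * h * z⁻¹ * h⁻¹) := by simp only [map_mul, map_inv]
          rw [e]
          exact IHc _ (Subgroup.mem_upperCentralSeries_succ_iff.mp hz h)
        · have e : nuL G z * nuR G h * (nuL G z)⁻¹ * (nuR G h)⁻¹ = ⁅nuL G z, nuR G h⁆ :=
            (commutatorElement_def _ _).symm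
          rw [e]
          exact hA z hz h
      refine ⟨hLm, ?_⟩
      have h2 := map_upperCentral nuSwap nuSwap_surj (n + 1 + 1) _ hLm
      rwa [nuSwap_L] at h2

end NuAux

open NuAux in
/-- Lemma 2.4: [Z_n(G), Gφ][G, Z_n(G)φ] ≤ Z_n(ν(G)) for every positive n. -/
theorem nu_upper_central (G : Type*) [Group G] (n : ℕ) (hn : 0 < n) :
    ⁅(Subgroup.upperCentralSeries G n).map (nuL G), (nuR G).range⁆ ⊔
        ⁅(nuL G).range, (Subgroup.upperCentralSeries G n).map (nuR G)⁆ ≤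
      Subgroup.upperCentralSeries (Nu G) n := by
  refine sup_le ?_ ?_
  · rw [Subgroup.commutator_le]
    rintro x hx y hy
    obtain ⟨z, hz, rfl⟩ := Subgroup.mem_map.mp hx
    obtain ⟨g, rfl⟩ := MonoidHom.mem_range.mp hy
    exact ((nu_key n).1 z hz g).1
  · rw [Subgroup.commutator_le]
    rintro x hx y hy
    obtain ⟨g, rfl⟩ := MonoidHom.mem_range.mp hx
    obtain ⟨z, hz, rfl⟩ := Subgroup.mem_map.mp hy
    exact ((nu_key n).1 z hz g).2
end
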